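/- arXiv:2502.04136 — 5 statements merged into one kernel-verified Lean document; each statement's English description precedes it below -/
import Mathlib

section
/- For n ≥ 0, r ≥ 2, k ≥ 1, and n - k = mr + d with 0 < d < r, the number of permutations of {1,...,n} in which the cycle containing 1 has length k and all other cycles have length not divisible by r equals (n-1)! · (r-1)(2r-1)⋯(mr-1) / (r^m · m!). -/
open Equiv Function

/-- Permutations in which the cycle containing `x` has length `k` and every
other cycle has length not divisible by `r`. -/
def QProp (r k : ℕ) {α : Type*} (x : α) (σ : Equiv.Perm α) : Prop :=
  Function.minimalPeriod ⇑σ x = k ∧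
    ∀ y : α, (∀ i : ℕ, (σ ^ i) x ≠ y) → ¬ r ∣ Function.minimalPeriod ⇑σ y

namespace Stmt5

variable {n : ℕ} {r k : ℕ}

lemma perm_mem_periodicPts {α : Type*} [Finite α] (σ : Perm α) (x : α) :
    x ∈ periodicPts ⇑σ := by
  refine ⟨orderOf σ, orderOf_pos σ, ?_⟩
  simp only [IsPeriodicPt, IsFixedPt, Equiv.Perm.iterate_eq_pow, pow_orderOf_eq_one]
  rfl

lemma perm_minPeriod_pos {α : Type*} [Finite α] (σ : Perm α) (x : α) :
    0 < minimalPeriod ⇑σ x :=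
  minimalPeriod_pos_of_mem_periodicPts (perm_mem_periodicPts σ x)

lemma orbit_symm {α : Type*} [Finite α] (σ : Perm α) {x y : α} (h : ∃ i : ℕ, (σ ^ i) x = y) :
    ∃ i : ℕ, (σ ^ i) y = x := by
  obtain ⟨i, rfl⟩ := h
  refine ⟨orderOf σ * (i + 1) - i, ?_⟩
  have h1 : (σ ^ (orderOf σ * (i + 1) - i)) ((σ ^ i) x) = (σ ^ (orderOf σ * (i + 1))) x := by
    rw [← Equiv.Perm.mul_apply, ← pow_add]
    congr 1
    have h2 : i + 1 ≤ orderOf σ * (i + 1) := Nat.le_mul_of_pos_left _ (orderOf_pos σ)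
    exact congrArg (fun j => σ ^ j) (Nat.sub_add_cancel (le_trans (Nat.le_succ i) h2))
  rw [h1, pow_mul, pow_orderOf_eq_one, one_pow, Equiv.Perm.one_apply]


lemma minimalPeriod_of_semiconj {α β : Type*} {f : α → α} {g : β → β} {e : α → β}
    (he : Injective e) (h : ∀ a, g (e a) = e (f a)) (a : α) :
    minimalPeriod g (e a) = minimalPeriod f a := by
  have key : ∀ n a, g^[n] (e a) = e (f^[n] a) := by
    intro n
    induction n with
    | zero => simp
    | succ n ih => intro a; rw [iterate_succ_apply, iterate_succ_apply, h, ih]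
  rw [minimalPeriod_eq_minimalPeriod_iff]
  intro n
  constructor
  · intro hn; exact he (by rw [← key]; exact hn)
  · intro hn; simpa [IsPeriodicPt, IsFixedPt, key] using congrArg e hn

lemma permCongr_pow_apply {α β : Type*} (e : α ≃ β) (σ : Perm α) (i : ℕ) (z : α) :
    ((e.permCongr σ) ^ i) (e z) = e ((σ ^ i) z) := by
  induction i with
  | zero => simp
  | succ i ih =>
    rw [pow_succ', pow_succ', Equiv.Perm.mul_apply, Equiv.Perm.mul_apply, permCongr_apply,
      ih, Equiv.symm_apply_apply]

lemma minimalPeriod_permCongr {α β : Type*} (e : α ≃ β) (σ : Perm α) (z : α) :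
    minimalPeriod ⇑(e.permCongr σ) (e z) = minimalPeriod ⇑σ z := by
  refine minimalPeriod_of_semiconj e.injective (fun a => ?_) z
  simp

lemma qProp_permCongr {α β : Type*} (r k : ℕ) (e : α ≃ β) (x : α) (σ : Perm α) :
    QProp r k (e x) (e.permCongr σ) ↔ QProp r k x σ := by
  unfold QProp
  rw [minimalPeriod_permCongr]
  refine and_congr Iff.rfl ?_
  constructor
  · intro h y hy
    rw [← minimalPeriod_permCongr e σ y]
    refine h (e y) fun i hi => hy i ?_
    have := permCongr_pow_apply e σ i x
    rw [this] at hi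
    exact e.injective hi
  · intro h y hy
    obtain ⟨z, rfl⟩ := e.surjective y
    rw [minimalPeriod_permCongr]
    refine h z fun i hi => hy i ?_
    rw [permCongr_pow_apply, hi]

lemma card_qProp_congr {α β : Type*} (r k : ℕ) (e : α ≃ β) (x : α) :
    Nat.card {σ : Perm β // QProp r k (e x) σ} = Nat.card {σ : Perm α // QProp r k x σ} :=
  (Nat.card_congr ((e.permCongr).subtypeEquiv fun σ => (qProp_permCongr r k e x σ).symm)).symm

section Step

variable (τ : Perm (Fin n)) (q : Fin n)

local notation "σ" => Equiv.Perm.decomposeFin.symm (q.succ, τ)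

lemma step_apply_succ (y : Fin n) :
    σ y.succ = if τ y = q then 0 else (τ y).succ := by
  rw [Equiv.Perm.decomposeFin_symm_apply_succ]
  split_ifs with h
  · rw [h, swap_apply_right]
  · exact swap_apply_of_ne_of_ne (Fin.succ_ne_zero _) (fun hc => h (Fin.succ_injective _ hc))

lemma step_pow_zero_eq {i : ℕ} (hi : i < minimalPeriod ⇑τ q) :
    (σ ^ (i + 1)) (0 : Fin (n + 1)) = ((τ ^ i) q).succ := by
  induction i with
  | zero =>
    rw [pow_one, pow_zero, Equiv.Perm.decomposeFin_symm_apply_zero, Equiv.Perm.one_apply]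
  | succ i ih =>
    have hi' : i < minimalPeriod ⇑τ q := Nat.lt_of_succ_lt hi
    rw [pow_succ', Equiv.Perm.mul_apply, ih hi', step_apply_succ]
    have hne : τ ((τ ^ i) q) ≠ q := by
      intro hc
      have hper : IsPeriodicPt ⇑τ (i + 1) q := by
        show (τ ^ (i + 1)) q = q
        rw [pow_succ', Equiv.Perm.mul_apply]
        exact hc
      have hd := hper.minimalPeriod_dvd
      have := Nat.le_of_dvd (Nat.succ_pos i) hd
      omega
    rw [if_neg hne]
    congr 1
    rw [pow_succ', Equiv.Perm.mul_apply]

lemma step_pow_zero_period :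
    (σ ^ (minimalPeriod ⇑τ q + 1)) (0 : Fin (n + 1)) = 0 := by
  have hpos : 0 < minimalPeriod ⇑τ q := perm_minPeriod_pos τ q
  obtain ⟨l, hl⟩ : ∃ l, minimalPeriod ⇑τ q = l + 1 :=
    ⟨minimalPeriod ⇑τ q - 1, by omega⟩
  rw [hl, pow_succ', Equiv.Perm.mul_apply, step_pow_zero_eq τ q (by omega), step_apply_succ]
  have hfix : (τ ^ (l + 1)) q = q := by
    have h1 : IsPeriodicPt ⇑τ (minimalPeriod ⇑τ q) q := isPeriodicPt_minimalPeriod ⇑τ q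
    rw [hl] at h1
    exact h1
  have : τ ((τ ^ l) q) = q := by
    conv_rhs => rw [← hfix]
    rw [pow_succ', Equiv.Perm.mul_apply]
  rw [if_pos this]

lemma step_minPeriod_zero :
    minimalPeriod ⇑σ (0 : Fin (n + 1)) = minimalPeriod ⇑τ q + 1 := by
  have hper : IsPeriodicPt ⇑σ (minimalPeriod ⇑τ q + 1) (0 : Fin (n + 1)) :=
    step_pow_zero_period τ q
  have hle : minimalPeriod ⇑σ (0 : Fin (n + 1)) ≤ minimalPeriod ⇑τ q + 1 :=
    hper.minimalPeriod_le (Nat.succ_pos _)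
  have hpos : 0 < minimalPeriod ⇑σ (0 : Fin (n + 1)) := perm_minPeriod_pos _ _
  by_contra hne
  obtain ⟨i, hi⟩ : ∃ i, minimalPeriod ⇑σ (0 : Fin (n + 1)) = i + 1 :=
    ⟨minimalPeriod ⇑σ (0 : Fin (n + 1)) - 1, by omega⟩
  have h0 : (σ ^ (i + 1)) (0 : Fin (n + 1)) = 0 := by
    have h1 : IsPeriodicPt ⇑σ (minimalPeriod ⇑σ (0 : Fin (n + 1))) (0 : Fin (n + 1)) :=
      isPeriodicPt_minimalPeriod ⇑σ (0 : Fin (n + 1))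
    rw [hi] at h1
    exact h1
  rw [step_pow_zero_eq τ q (by omega)] at h0
  exact Fin.succ_ne_zero _ h0

lemma step_pow_zero_mem (i : ℕ) :
    (σ ^ i) (0 : Fin (n + 1)) = 0 ∨ ∃ j, (σ ^ i) (0 : Fin (n + 1)) = ((τ ^ j) q).succ := by
  have hmod : (σ ^ (i % (minimalPeriod ⇑τ q + 1))) (0 : Fin (n + 1)) =
      (σ ^ i) (0 : Fin (n + 1)) := by
    have h1 := iterate_mod_minimalPeriod_eq (f := ⇑σ) (x := (0 : Fin (n + 1))) (n := i)
    rw [step_minPeriod_zero] at h1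
    exact h1
  rw [← hmod]
  rcases Nat.eq_zero_or_pos (i % (minimalPeriod ⇑τ q + 1)) with h0 | hpos
  · left; rw [h0, pow_zero, Equiv.Perm.one_apply]
  · right
    obtain ⟨j, hj⟩ : ∃ j, i % (minimalPeriod ⇑τ q + 1) = j + 1 :=
      ⟨i % (minimalPeriod ⇑τ q + 1) - 1, by omega⟩
    have hjlt : j < minimalPeriod ⇑τ q := by
      have h2 := Nat.mod_lt i (show 0 < minimalPeriod ⇑τ q + 1 by omega)
      omega
    exact ⟨j, by rw [hj, step_pow_zero_eq τ q hjlt]⟩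

lemma step_orbit_iff (y : Fin n) :
    (∀ i : ℕ, (σ ^ i) (0 : Fin (n + 1)) ≠ y.succ) ↔ (∀ i : ℕ, (τ ^ i) q ≠ y) := by
  constructor
  · intro h i hc
    have hmod : (τ ^ (i % minimalPeriod ⇑τ q)) q = (τ ^ i) q :=
      iterate_mod_minimalPeriod_eq (f := ⇑τ) (x := q) (n := i)
    have hlt : i % minimalPeriod ⇑τ q < minimalPeriod ⇑τ q :=
      Nat.mod_lt i (perm_minPeriod_pos τ q)
    exact h (i % minimalPeriod ⇑τ q + 1) (by rw [step_pow_zero_eq τ q hlt, hmod, hc])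
  · intro h i hc
    rcases step_pow_zero_mem τ q i with h0 | ⟨j, hj⟩
    · rw [hc] at h0; exact Fin.succ_ne_zero _ h0
    · rw [hc] at hj; exact h j (Fin.succ_injective _ hj.symm)

lemma step_pow_succ_eq {y : Fin n} (hy : ∀ i : ℕ, (τ ^ i) q ≠ y) (i : ℕ) :
    (σ ^ i) y.succ = ((τ ^ i) y).succ := by
  have hyq : ∀ i : ℕ, (τ ^ i) y ≠ q := by
    intro i hc
    obtain ⟨j, hj⟩ := orbit_symm τ ⟨i, hc⟩
    exact hy j hj
  induction i with
  | zero => rw [pow_zero, pow_zero, Equiv.Perm.one_apply, Equiv.Perm.one_apply]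
  | succ i ih =>
    rw [pow_succ', pow_succ', Equiv.Perm.mul_apply, Equiv.Perm.mul_apply, ih, step_apply_succ]
    rw [if_neg]
    intro hc
    exact hyq (i + 1) (by rw [pow_succ', Equiv.Perm.mul_apply]; exact hc)

lemma step_minPeriod_succ {y : Fin n} (hy : ∀ i : ℕ, (τ ^ i) q ≠ y) :
    minimalPeriod ⇑σ y.succ = minimalPeriod ⇑τ y := by
  rw [minimalPeriod_eq_minimalPeriod_iff]
  intro m
  have h1 : (σ ^ m) y.succ = ((τ ^ m) y).succ := step_pow_succ_eq τ q hy m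
  show (σ ^ m) y.succ = y.succ ↔ (τ ^ m) y = y
  rw [h1]
  exact ⟨fun h => Fin.succ_injective _ h, fun h => by rw [h]⟩

lemma step_iff :
    QProp r (k + 1) (0 : Fin (n + 1)) (Equiv.Perm.decomposeFin.symm (q.succ, τ)) ↔
      QProp r k q τ := by
  unfold QProp
  rw [step_minPeriod_zero]
  refine and_congr (by omega) ?_
  constructor
  · intro h y hy
    rw [← step_minPeriod_succ τ q hy]
    exact h y.succ ((step_orbit_iff τ q y).2 hy)
  · intro h z hz
    rcases Fin.eq_zero_or_eq_succ z with rfl | ⟨y, rfl⟩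
    · exact absurd (by rw [pow_zero, Equiv.Perm.one_apply]) (hz 0)
    · have hy : ∀ i : ℕ, (τ ^ i) q ≠ y := (step_orbit_iff τ q y).1 hz
      rw [step_minPeriod_succ τ q hy]
      exact h y hy

end Step

section Base

variable (τ : Perm (Fin n))

local notation "σ₀" => Equiv.Perm.decomposeFin.symm ((0 : Fin (n + 1)), τ)

lemma base_apply_succ (y : Fin n) : σ₀ y.succ = (τ y).succ := by
  rw [Equiv.Perm.decomposeFin_symm_apply_succ, swap_self, Equiv.refl_apply]

lemma base_pow_zero (i : ℕ) : (σ₀ ^ i) (0 : Fin (n + 1)) = 0 := by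
  induction i with
  | zero => rw [pow_zero, Equiv.Perm.one_apply]
  | succ i ih =>
    rw [pow_succ, Equiv.Perm.mul_apply, Equiv.Perm.decomposeFin_symm_apply_zero, ih]

lemma base_minPeriod_succ (y : Fin n) : minimalPeriod ⇑σ₀ y.succ = minimalPeriod ⇑τ y := by
  have key : ∀ (i : ℕ) (y : Fin n), (σ₀ ^ i) y.succ = ((τ ^ i) y).succ := by
    intro i
    induction i with
    | zero => intro y; rw [pow_zero, pow_zero, Equiv.Perm.one_apply, Equiv.Perm.one_apply]
    | succ i ih =>
      intro y
      rw [pow_succ', pow_succ', Equiv.Perm.mul_apply, Equiv.Perm.mul_apply, ih, base_apply_succ]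
  rw [minimalPeriod_eq_minimalPeriod_iff]
  intro m
  show (σ₀ ^ m) y.succ = y.succ ↔ (τ ^ m) y = y
  rw [key m y]
  exact ⟨fun h => Fin.succ_injective _ h, fun h => by rw [h]⟩

lemma base_iff :
    QProp r 1 (0 : Fin (n + 1)) (Equiv.Perm.decomposeFin.symm ((0 : Fin (n + 1)), τ)) ↔
      ∀ y : Fin n, ¬ r ∣ minimalPeriod ⇑τ y := by
  unfold QProp
  have h1 : minimalPeriod ⇑σ₀ (0 : Fin (n + 1)) = 1 := by
    rw [minimalPeriod_eq_one_iff_isFixedPt]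
    show σ₀ 0 = 0
    exact Equiv.Perm.decomposeFin_symm_apply_zero _ _
  rw [h1]
  simp only [true_and]
  constructor
  · intro h y
    rw [← base_minPeriod_succ τ y]
    refine h y.succ fun i hc => ?_
    rw [base_pow_zero] at hc
    exact Fin.succ_ne_zero _ hc.symm
  · intro h z hz
    rcases Fin.eq_zero_or_eq_succ z with rfl | ⟨y, rfl⟩
    · exact absurd (by rw [pow_zero, Equiv.Perm.one_apply]) (hz 0)
    · rw [base_minPeriod_succ]
      exact h y

end Base

section Count

variable (r k : ℕ)

/-- Number of permutations of `t+1` points where the cycle of the base point has length `k`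
and all other cycles have length not divisible by `r`. -/
noncomputable def Ncard (t : ℕ) : ℕ := Nat.card {σ : Perm (Fin (t + 1)) // QProp r k (0 : Fin (t + 1)) σ}

/-- Number of permutations of `t` points all of whose cycles have length not divisible by `r`. -/
noncomputable def Dcard (t : ℕ) : ℕ :=
  Nat.card {σ : Perm (Fin t) // ∀ y : Fin t, ¬ r ∣ minimalPeriod ⇑σ y}

lemma card_qProp_basepoint {N : ℕ} (q : Fin (N + 1)) :
    Nat.card {σ : Perm (Fin (N + 1)) // QProp r k q σ} = Ncard r k N := by
  have h := card_qProp_congr r k (Equiv.swap (0 : Fin (N + 1)) q) 0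
  rw [swap_apply_left] at h
  exact h

lemma Ncard_one (t : ℕ) : Ncard r 1 t = Dcard r t := by
  refine Nat.card_congr ?_
  have e1 : {σ : Perm (Fin (t + 1)) // QProp r 1 (0 : Fin (t + 1)) σ} ≃
      {pτ : Fin (t + 1) × Perm (Fin t) //
        QProp r 1 (0 : Fin (t + 1)) (Equiv.Perm.decomposeFin.symm pτ)} :=
    Equiv.Perm.decomposeFin.subtypeEquiv fun σ => by rw [Equiv.symm_apply_apply]
  refine e1.trans ?_
  have hp0 : ∀ (pτ : Fin (t + 1) × Perm (Fin t)),
      QProp r 1 (0 : Fin (t + 1)) (Equiv.Perm.decomposeFin.symm pτ) → pτ.1 = 0 := by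
    rintro ⟨p, τ⟩ h
    have h1 : minimalPeriod ⇑(Equiv.Perm.decomposeFin.symm (p, τ)) (0 : Fin (t + 1)) = 1 := h.1
    rw [minimalPeriod_eq_one_iff_isFixedPt] at h1
    have h2 : Equiv.Perm.decomposeFin.symm (p, τ) (0 : Fin (t + 1)) = p :=
      Equiv.Perm.decomposeFin_symm_apply_zero _ _
    rw [IsFixedPt, h2] at h1
    exact h1
  refine
    { toFun := fun x => ⟨x.1.2, ?_⟩
      invFun := fun τ => ⟨((0 : Fin (t + 1)), τ.1), (base_iff τ.1).2 τ.2⟩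
      left_inv := ?_
      right_inv := fun τ => rfl }
  · obtain ⟨⟨p, τ⟩, h⟩ := x
    have hp := hp0 _ h
    simp only at hp
    subst hp
    exact (base_iff τ).1 h
  · rintro ⟨⟨p, τ⟩, h⟩
    have hp := hp0 _ h
    simp only at hp
    subst hp
    rfl

lemma Ncard_succ (t : ℕ) (hk : 1 ≤ k) :
    Ncard r (k + 1) (t + 1) = (t + 1) * Ncard r k t := by
  have e1 : {σ : Perm (Fin (t + 2)) // QProp r (k + 1) (0 : Fin (t + 2)) σ} ≃
      {pτ : Fin (t + 2) × Perm (Fin (t + 1)) //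
        QProp r (k + 1) (0 : Fin (t + 2)) (Equiv.Perm.decomposeFin.symm pτ)} :=
    Equiv.Perm.decomposeFin.subtypeEquiv fun σ => by rw [Equiv.symm_apply_apply]
  have hne : ∀ (pτ : Fin (t + 2) × Perm (Fin (t + 1))),
      QProp r (k + 1) (0 : Fin (t + 2)) (Equiv.Perm.decomposeFin.symm pτ) → pτ.1 ≠ 0 := by
    rintro ⟨p, τ⟩ h rfl
    have h1 : minimalPeriod ⇑(Equiv.Perm.decomposeFin.symm ((0 : Fin (t + 2)), τ))
        (0 : Fin (t + 2)) = k + 1 := h.1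
    have h2 : minimalPeriod ⇑(Equiv.Perm.decomposeFin.symm ((0 : Fin (t + 2)), τ))
        (0 : Fin (t + 2)) = 1 := by
      rw [minimalPeriod_eq_one_iff_isFixedPt]
      show Equiv.Perm.decomposeFin.symm ((0 : Fin (t + 2)), τ) 0 = 0
      exact Equiv.Perm.decomposeFin_symm_apply_zero _ _
    omega
  have e2 : {pτ : Fin (t + 2) × Perm (Fin (t + 1)) //
      QProp r (k + 1) (0 : Fin (t + 2)) (Equiv.Perm.decomposeFin.symm pτ)} ≃
      {qτ : Fin (t + 1) × Perm (Fin (t + 1)) // QProp r k qτ.1 qτ.2} :=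
    { toFun := fun x => ⟨((x.1.1).pred (hne x.1 x.2), x.1.2), by
        have h := x.2
        have hs : ((x.1.1).pred (hne x.1 x.2)).succ = x.1.1 := Fin.succ_pred _ _
        rw [show x.1 = (x.1.1, x.1.2) from rfl, ← hs] at h
        exact (step_iff x.1.2 ((x.1.1).pred (hne x.1 x.2))).1 h⟩
      invFun := fun x => ⟨((x.1.1).succ, x.1.2), by
        refine (step_iff x.1.2 x.1.1).2 ?_
        obtain ⟨⟨q, τ⟩, hx⟩ := x
        exact hx⟩
      left_inv := by
        rintro ⟨⟨p, τ⟩, h⟩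
        apply Subtype.ext
        show (_, _) = (p, τ)
        rw [Fin.succ_pred]
      right_inv := by
        rintro ⟨⟨q, τ⟩, h⟩
        apply Subtype.ext
        show (_, _) = (q, τ)
        rw [Fin.pred_succ] }
  have e3 : {qτ : Fin (t + 1) × Perm (Fin (t + 1)) // QProp r k qτ.1 qτ.2} ≃
      Σ q : Fin (t + 1), {τ : Perm (Fin (t + 1)) // QProp r k q τ} :=
    Equiv.subtypeProdEquivSigmaSubtype _
  have e4 : (Σ q : Fin (t + 1), {τ : Perm (Fin (t + 1)) // QProp r k q τ}) ≃
      Fin (t + 1) × {τ : Perm (Fin (t + 1)) // QProp r k (0 : Fin (t + 1)) τ} := by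
    refine Equiv.trans (Equiv.sigmaCongrRight fun q => ?_) (Equiv.sigmaEquivProd _ _)
    refine ((Equiv.swap (0 : Fin (t + 1)) q).permCongr.subtypeEquiv fun σ => ?_).symm
    have h := qProp_permCongr r k (Equiv.swap (0 : Fin (t + 1)) q) 0 σ
    rw [swap_apply_left] at h
    exact h.symm
  calc Ncard r (k + 1) (t + 1)
      = Nat.card (Fin (t + 1) ×
          {τ : Perm (Fin (t + 1)) // QProp r k (0 : Fin (t + 1)) τ}) :=
        Nat.card_congr ((e1.trans e2).trans (e3.trans e4))
    _ = (t + 1) * Ncard r k t := by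
        rw [Nat.card_prod, Nat.card_eq_fintype_card, Fintype.card_fin, Ncard]

lemma minPeriod_le {N : ℕ} (σ : Perm (Fin N)) (x : Fin N) : minimalPeriod ⇑σ x ≤ N := by
  have hinj := iterate_injOn_Iio_minimalPeriod (f := ⇑σ) (x := x)
  have h := Finset.card_le_card_of_injOn (f := fun i => (σ ^ i) x)
    (s := Finset.range (minimalPeriod ⇑σ x)) (t := Finset.univ)
    (fun a _ => Finset.mem_univ _)
    (fun a ha b hb hab => hinj (by simpa using ha) (by simpa using hb) hab)
  simpa using h

lemma Dcard_zero : Dcard r 0 = 1 := by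
  have hsub : Subsingleton {σ : Perm (Fin 0) // ∀ y : Fin 0, ¬ r ∣ minimalPeriod ⇑σ y} := by
    constructor
    intro a b
    apply Subtype.ext
    ext x
    exact x.elim0
  exact Nat.card_eq_one_iff_unique.2 ⟨hsub, ⟨⟨1, fun y => y.elim0⟩⟩⟩

lemma dProp_iff_qProp {t : ℕ} (σ : Perm (Fin (t + 1))) (k : ℕ) :
    ((∀ y : Fin (t + 1), ¬ r ∣ minimalPeriod ⇑σ y) ∧ minimalPeriod ⇑σ 0 = k) ↔
      (QProp r k (0 : Fin (t + 1)) σ ∧ ¬ r ∣ k) := by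
  constructor
  · rintro ⟨h1, h2⟩
    exact ⟨⟨h2, fun y _ => h1 y⟩, h2 ▸ h1 0⟩
  · rintro ⟨⟨h1, h2⟩, h3⟩
    refine ⟨fun y => ?_, h1⟩
    by_cases hy : ∀ i : ℕ, (σ ^ i) (0 : Fin (t + 1)) ≠ y
    · exact h2 y hy
    · push_neg at hy
      obtain ⟨i, rfl⟩ := hy
      have h4 : minimalPeriod ⇑σ ((σ ^ i) (0 : Fin (t + 1))) = minimalPeriod ⇑σ 0 :=
        minimalPeriod_apply_iterate (perm_mem_periodicPts σ 0) i
      rw [h4, h1]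
      exact h3

lemma Dcard_succ (t : ℕ) :
    Dcard r (t + 1) = ∑ k ∈ Finset.Icc 1 (t + 1), if r ∣ k then 0 else Ncard r k t := by
  classical
  rw [Dcard, Nat.card_eq_fintype_card, Fintype.card_subtype]
  rw [Finset.card_eq_sum_card_fiberwise
    (f := fun (σ : Perm (Fin (t + 1))) => minimalPeriod ⇑σ (0 : Fin (t + 1)))
    (t := Finset.Icc 1 (t + 1)) (fun σ _ => Finset.mem_Icc.2
      ⟨perm_minPeriod_pos σ 0, minPeriod_le σ 0⟩)]
  refine Finset.sum_congr rfl fun k _ => ?_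
  rw [Finset.filter_filter]
  rw [Finset.filter_congr (q := fun σ => QProp r k (0 : Fin (t + 1)) σ ∧ ¬ r ∣ k)
    (fun σ _ => dProp_iff_qProp r σ k)]
  split_ifs with hrk
  · rw [Finset.card_eq_zero]
    apply Finset.filter_false_of_mem
    intro σ _
    rintro ⟨_, h2⟩
    exact h2 hrk
  · have h5 : ∀ σ : Perm (Fin (t + 1)),
          (QProp r k (0 : Fin (t + 1)) σ ∧ ¬ r ∣ k) ↔ QProp r k (0 : Fin (t + 1)) σ :=
      fun σ => and_iff_left hrk
    rw [Finset.filter_congr (fun σ _ => h5 σ)]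
    rw [Ncard, Nat.card_eq_fintype_card, Fintype.card_subtype]

end Count

section Arith

open Finset

/-- `c m = ∏_{j=1}^m (jr-1)/(jr)` -/
noncomputable def cfun (r m : ℕ) : ℚ := ∏ j ∈ Icc 1 m, (((j : ℚ) * r - 1) / ((j : ℚ) * r))

variable {r : ℕ}

lemma jr_ne_zero (hr : 2 ≤ r) {j : ℕ} (hj : 1 ≤ j) : ((j : ℚ) * r) ≠ 0 := by
  have h1 : (1 : ℚ) ≤ (j : ℚ) := by exact_mod_cast hj
  have h2 : (2 : ℚ) ≤ (r : ℚ) := by exact_mod_cast hr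
  positivity

lemma cfun_succ (m : ℕ) :
    cfun r (m + 1) = cfun r m * ((((m : ℚ) + 1) * r - 1) / (((m : ℚ) + 1) * r)) := by
  unfold cfun
  rw [Finset.prod_Icc_succ_top (Nat.le_add_left 1 m)]
  push_cast
  ring

lemma key_identity (hr : 2 ≤ r) (m : ℕ) :
    ((r : ℚ) - 1) * ∑ i ∈ range m, cfun r i = (m : ℚ) * r * cfun r m := by
  induction m with
  | zero => simp
  | succ m ih =>
    rw [Finset.sum_range_succ, mul_add, ih, cfun_succ, Nat.cast_succ]
    have hne : (((m : ℚ) + 1) * r) ≠ 0 := by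
      have h := jr_ne_zero hr (j := m + 1) (Nat.le_add_left 1 m)
      push_cast at h
      exact h
    field_simp
    ring

lemma sum_div_floor (hr : 2 ≤ r) (T : ℕ) :
    ∑ s ∈ range T, cfun r (s / r) =
      (r : ℚ) * ∑ i ∈ range (T / r), cfun r i + ((T % r : ℕ) : ℚ) * cfun r (T / r) := by
  have hrpos : 0 < r := by omega
  induction T with
  | zero => simp
  | succ T ih =>
    rw [Finset.sum_range_succ, ih]
    have hmod1 : (T + 1) % r = (T % r + 1) % r := by
      conv_lhs => rw [Nat.add_mod, Nat.mod_eq_of_lt (show 1 < r by omega)]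
    have hTlt : T % r < r := Nat.mod_lt _ hrpos
    by_cases hd : r ∣ T + 1
    · have hdiv : (T + 1) / r = T / r + 1 := Nat.succ_div_of_dvd hd
      have hmod0 : (T + 1) % r = 0 := by
        obtain ⟨c, hc⟩ := hd
        rw [hc, Nat.mul_mod_right]
      have hTmod : T % r = r - 1 := by
        by_contra hc
        have hlt : T % r + 1 < r := by omega
        rw [hmod1, Nat.mod_eq_of_lt hlt] at hmod0
        omega
      rw [hdiv, hmod0, Finset.sum_range_succ, hTmod,
        Nat.cast_sub (show 1 ≤ r by omega)]
      push_cast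
      ring
    · have hdiv : (T + 1) / r = T / r := Nat.succ_div_of_not_dvd hd
      have hne : T % r + 1 ≠ r := by
        intro hc
        apply hd
        apply Nat.dvd_of_mod_eq_zero
        rw [hmod1, hc, Nat.mod_self]
      have hmod : (T + 1) % r = T % r + 1 := by
        rw [hmod1, Nat.mod_eq_of_lt (by omega)]
      rw [hdiv, hmod]
      push_cast
      ring

lemma sum_dvd_filter (hr : 2 ≤ r) (f : ℕ → ℚ) (T : ℕ) :
    ∑ s ∈ Icc 1 T, (if r ∣ s then f s else 0) = ∑ j ∈ Icc 1 (T / r), f (j * r) := by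
  induction T with
  | zero => simp
  | succ T ih =>
    rw [Finset.sum_Icc_succ_top (Nat.le_add_left 1 T), ih]
    by_cases hd : r ∣ T + 1
    · have hdiv : (T + 1) / r = T / r + 1 := Nat.succ_div_of_dvd hd
      rw [if_pos hd, hdiv, Finset.sum_Icc_succ_top (Nat.le_add_left 1 (T / r))]
      congr 1
      congr 1
      rw [← hdiv]
      exact (Nat.div_mul_cancel hd).symm
    · have hdiv : (T + 1) / r = T / r := Nat.succ_div_of_not_dvd hd
      rw [if_neg hd, hdiv, add_zero]

lemma sub_mul_div_eq {T j : ℕ} (hr : 2 ≤ r) (hj : j ≤ T / r) :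
    (T - j * r) / r = T / r - j := by
  have hrpos : 0 < r := by omega
  have h1 : T = r * (T / r) + T % r := (Nat.div_add_mod T r).symm
  have h2 : T - j * r = (T / r - j) * r + T % r := by
    have h4 : j * r ≤ T / r * r := Nat.mul_le_mul_right r hj
    have h3 : (T / r - j) * r = T / r * r - j * r := Nat.sub_mul _ _ _
    have h5 : T / r * r = r * (T / r) := Nat.mul_comm _ _
    omega
  have hTlt : T % r < r := Nat.mod_lt _ hrpos
  rw [h2, Nat.add_comm, Nat.add_mul_div_right _ _ hrpos, Nat.div_eq_of_lt hTlt, Nat.zero_add]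

lemma sum_Icc_to_range (f : ℕ → ℚ) (T : ℕ) :
    ∑ k ∈ Icc 1 T, f k = ∑ i ∈ range T, f (1 + i) := by
  rw [← Finset.Ico_add_one_right_eq_Icc, Finset.sum_Ico_eq_sum_range]
  simp

end Arith

section Final

open Finset

variable {r : ℕ}

lemma Ncard_eq :
    ∀ k, 1 ≤ k → ∀ t, k ≤ t + 1 →
      (Ncard r k t : ℚ) * ((t + 1 - k).factorial : ℚ) =
        (t.factorial : ℚ) * (Dcard r (t + 1 - k) : ℚ) := by
  intro k
  induction k with
  | zero => intro h; omega
  | succ k ih =>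
    intro _ t ht
    rcases Nat.eq_zero_or_pos k with rfl | hk1
    · rw [Nat.add_sub_cancel, Ncard_one]
      ring
    · obtain ⟨t', rfl⟩ : ∃ t', t = t' + 1 := ⟨t - 1, by omega⟩
      have hih := ih hk1 t' (by omega)
      have hsub : t' + 1 + 1 - (k + 1) = t' + 1 - k := by omega
      rw [hsub, Ncard_succ r k t' hk1, Nat.factorial_succ]
      push_cast
      push_cast at hih
      linear_combination ((t' : ℚ) + 1) * hih

lemma Dcard_eq (hr : 2 ≤ r) : ∀ t, (Dcard r t : ℚ) = (t.factorial : ℚ) * cfun r (t / r) := by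
  intro t
  induction t using Nat.strong_induction_on with
  | _ t ih =>
    match t with
    | 0 => simp [Dcard_zero, cfun, Nat.zero_div]
    | T + 1 =>
      have hrpos : 0 < r := by omega
      set M := (T + 1) / r with hM
      have hcast : (Dcard r (T + 1) : ℚ) =
          ∑ k ∈ Icc 1 (T + 1), (if r ∣ k then 0 else (Ncard r k T : ℚ)) := by
        rw [Dcard_succ r T]
        push_cast
        exact Finset.sum_congr rfl fun k _ => by split_ifs <;> simp
      have hNc : ∀ k ∈ Icc 1 (T + 1),
          (Ncard r k T : ℚ) = (T.factorial : ℚ) * cfun r ((T + 1 - k) / r) := by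
        intro k hk
        rw [Finset.mem_Icc] at hk
        have h1 := Ncard_eq (r := r) k hk.1 T (by omega)
        have h2 : (Dcard r (T + 1 - k) : ℚ) =
            ((T + 1 - k).factorial : ℚ) * cfun r ((T + 1 - k) / r) :=
          ih (T + 1 - k) (by omega)
        rw [h2] at h1
        have hfne : ((T + 1 - k).factorial : ℚ) ≠ 0 := by
          exact_mod_cast Nat.factorial_ne_zero _
        refine mul_right_cancel₀ hfne ?_
        rw [h1]
        ring
      rw [hcast, Finset.sum_congr rfl fun k hk => by
        rw [show (if r ∣ k then (0 : ℚ) else (Ncard r k T : ℚ)) =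
            (T.factorial : ℚ) * (if r ∣ k then 0 else cfun r ((T + 1 - k) / r)) by
          split_ifs with h
          · ring
          · rw [hNc k hk]]]
      rw [← Finset.mul_sum]
      have hsplit : ∀ k, (if r ∣ k then (0 : ℚ) else cfun r ((T + 1 - k) / r)) =
          cfun r ((T + 1 - k) / r) - (if r ∣ k then cfun r ((T + 1 - k) / r) else 0) := by
        intro k; split_ifs <;> ring
      rw [Finset.sum_congr rfl fun k _ => hsplit k, Finset.sum_sub_distrib]
      -- first sum
      have hA : ∑ k ∈ Icc 1 (T + 1), cfun r ((T + 1 - k) / r) =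
          (r : ℚ) * ∑ i ∈ range M, cfun r i + (((T + 1) % r : ℕ) : ℚ) * cfun r M := by
        rw [sum_Icc_to_range (fun k => cfun r ((T + 1 - k) / r)) (T + 1)]
        have : ∀ i, T + 1 - (1 + i) = T - i := fun i => by omega
        rw [Finset.sum_congr rfl fun i _ => by rw [this i]]
        have hrefl := Finset.sum_range_reflect (fun j => cfun r (j / r)) (T + 1)
        simp only [Nat.add_sub_cancel] at hrefl
        calc ∑ i ∈ range (T + 1), cfun r ((T - i) / r)
            = ∑ i ∈ range (T + 1), cfun r ((T + 1 - 1 - i) / r) := by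
              refine Finset.sum_congr rfl fun i _ => by
                have : T + 1 - 1 - i = T - i := by omega
                rw [this]
          _ = ∑ j ∈ range (T + 1), cfun r (j / r) :=
              Finset.sum_range_reflect (fun j => cfun r (j / r)) (T + 1)
          _ = _ := sum_div_floor hr (T + 1)
      -- second sum
      have hB : ∑ k ∈ Icc 1 (T + 1), (if r ∣ k then cfun r ((T + 1 - k) / r) else 0) =
          ∑ i ∈ range M, cfun r i := by
        rw [sum_dvd_filter hr (fun s => cfun r ((T + 1 - s) / r)) (T + 1)]
        have h1 : ∀ j ∈ Icc 1 M, cfun r ((T + 1 - j * r) / r) = cfun r (M - j) := by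
          intro j hj
          rw [Finset.mem_Icc] at hj
          rw [sub_mul_div_eq hr hj.2]
        rw [Finset.sum_congr rfl h1, sum_Icc_to_range (fun j => cfun r (M - j)) M]
        calc ∑ i ∈ range M, cfun r (M - (1 + i))
            = ∑ i ∈ range M, cfun r (M - 1 - i) := by
              refine Finset.sum_congr rfl fun i _ => by
                have : M - (1 + i) = M - 1 - i := by omega
                rw [this]
          _ = ∑ i ∈ range M, cfun r i := Finset.sum_range_reflect _ M
      rw [hA, hB]
      have hkey := key_identity hr M
      have hdm : (r : ℚ) * (M : ℚ) + (((T + 1) % r : ℕ) : ℚ) = (T : ℚ) + 1 := by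
        have h6 := Nat.div_add_mod (T + 1) r
        have h7 : ((r * ((T + 1) / r) + (T + 1) % r : ℕ) : ℚ) = ((T + 1 : ℕ) : ℚ) := by
          exact_mod_cast congrArg (Nat.cast : ℕ → ℚ) h6
        push_cast at h7
        rw [hM]
        linarith [h7]
      rw [Nat.factorial_succ]
      push_cast
      linear_combination (T.factorial : ℚ) * hkey + (T.factorial : ℚ) * cfun r M * hdm

lemma cfun_mul_eq (hr : 2 ≤ r) (m : ℕ) :
    cfun r m * ((r : ℚ) ^ m * (m.factorial : ℚ)) = ∏ j ∈ Icc 1 m, ((j : ℚ) * r - 1) := by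
  have hprod2 : ∏ j ∈ Icc 1 m, ((j : ℚ) * r) = (m.factorial : ℚ) * (r : ℚ) ^ m := by
    rw [Finset.prod_mul_distrib, Finset.prod_const, Nat.card_Icc]
    have h1 : ∏ j ∈ Icc 1 m, (j : ℚ) = (m.factorial : ℚ) := by
      rw [← Nat.cast_prod]
      congr 1
      rw [← Finset.Ico_add_one_right_eq_Icc]
      exact Finset.prod_Ico_id_eq_factorial m
    rw [h1]
    norm_num
  calc cfun r m * ((r : ℚ) ^ m * (m.factorial : ℚ))
      = cfun r m * ∏ j ∈ Icc 1 m, ((j : ℚ) * r) := by rw [hprod2]; ring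
    _ = ∏ j ∈ Icc 1 m, (((j : ℚ) * r - 1) / ((j : ℚ) * r) * ((j : ℚ) * r)) := by
        rw [cfun, ← Finset.prod_mul_distrib]
    _ = ∏ j ∈ Icc 1 m, ((j : ℚ) * r - 1) := by
        refine Finset.prod_congr rfl fun j hj => ?_
        rw [Finset.mem_Icc] at hj
        exact div_mul_cancel₀ _ (jr_ne_zero hr hj.1)

end Final

end Stmt5

open Equiv Function Stmt5 in
/-- if `n - k = mr + d` with `0 < d < r`, then
`|Q_{r,k}(n)| · r^m · m! = (n-1)! · (r-1)(2r-1)⋯(mr-1)`. -/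
theorem stmt5 (n r k m d : ℕ) (hr : 2 ≤ r) (hk : 1 ≤ k)
    (h : n - k = m * r + d) (hd0 : 0 < d) (hdr : d < r) :
    Nat.card {σ : Equiv.Perm (Fin n) // QProp r k
        (⟨0, by omega⟩ : Fin n) σ} * (r ^ m * Nat.factorial m) =
      Nat.factorial (n - 1) * ∏ j ∈ Finset.Icc 1 m, (j * r - 1) := by
  have hkn : k < n := by
    rcases Nat.lt_or_ge k n with h' | h'
    · exact h'
    · exfalso
      have : n - k = 0 := by omega
      omega
  obtain ⟨t, rfl⟩ : ∃ t, n = t + 1 := ⟨n - 1, by omega⟩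
  have hbase : (⟨0, by omega⟩ : Fin (t + 1)) = (0 : Fin (t + 1)) := by
    apply Fin.ext
    simp
  rw [hbase]
  have hcard : Nat.card {σ : Equiv.Perm (Fin (t + 1)) // QProp r k (0 : Fin (t + 1)) σ} =
      Ncard r k t := rfl
  rw [hcard]
  have hnk : t + 1 - k = m * r + d := h
  have hdiv : (t + 1 - k) / r = m := by
    rw [hnk, Nat.add_comm, Nat.add_mul_div_right _ _ (show 0 < r by omega),
      Nat.div_eq_of_lt hdr, Nat.zero_add]
  -- Ncard in ℚ
  have hN : (Ncard r k t : ℚ) = (t.factorial : ℚ) * cfun r m := by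
    have h1 := Ncard_eq (r := r) k hk t (by omega)
    have h2 := Dcard_eq hr (t + 1 - k)
    rw [hdiv] at h2
    rw [h2] at h1
    have hfne : ((t + 1 - k).factorial : ℚ) ≠ 0 := by
      exact_mod_cast Nat.factorial_ne_zero _
    refine mul_right_cancel₀ hfne ?_
    rw [h1]
    ring
  have hsimp : t + 1 - 1 = t := by omega
  rw [hsimp]
  rw [← Nat.cast_inj (R := ℚ)]
  have hprodcast : ((∏ j ∈ Finset.Icc 1 m, (j * r - 1) : ℕ) : ℚ) =
      ∏ j ∈ Finset.Icc 1 m, ((j : ℚ) * r - 1) := by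
    rw [Nat.cast_prod]
    refine Finset.prod_congr rfl fun j hj => ?_
    rw [Finset.mem_Icc] at hj
    have h1 : 1 ≤ j * r := by
      calc 1 = 1 * 1 := rfl
      _ ≤ j * r := Nat.mul_le_mul hj.1 (by omega)
    rw [Nat.cast_sub h1]
    push_cast
    ring
  push_cast [hprodcast]
  rw [hN, ← cfun_mul_eq hr m]
  push_cast
  ring
end

section
/- For n ≥ 1, the number of permutations of {1,...,2n} all of whose cycle lengths are odd equals the number of permutations of {1,...,2n} all of whose cycle lengths are even, and both equal ((2n-1)!!)^2. -/
open Equiv Equiv.Perm Function Finset Nat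

namespace Stmt6

variable {m : ℕ}


variable {m : ℕ}

lemma mem_pp (σ : Perm (Fin m)) (x : Fin m) : x ∈ periodicPts ⇑σ :=
  ⟨orderOf σ, orderOf_pos σ, by
    simp [IsPeriodicPt, IsFixedPt, iterate_eq_pow, pow_orderOf_eq_one]⟩

lemma mp_pos (σ : Perm (Fin m)) (x : Fin m) : 0 < minimalPeriod ⇑σ x :=
  minimalPeriod_pos_of_mem_periodicPts (mem_pp σ x)

lemma mp_congr {α β : Type*} {f : α → α} {g : β → β} {x : α} {y : β}
    (hx : x ∈ periodicPts f) (h : ∀ j, (f^[j] x = x ↔ g^[j] y = y)) :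
    minimalPeriod f x = minimalPeriod g y := by
  have hy : y ∈ periodicPts g :=
    ⟨minimalPeriod f x, minimalPeriod_pos_of_mem_periodicPts hx,
      (h _).1 (iterate_minimalPeriod)⟩
  refine le_antisymm ?_ ?_
  · exact IsPeriodicPt.minimalPeriod_le (minimalPeriod_pos_of_mem_periodicPts hy)
      ((h _).2 (iterate_minimalPeriod))
  · exact IsPeriodicPt.minimalPeriod_le (minimalPeriod_pos_of_mem_periodicPts hx)
      ((h _).1 (iterate_minimalPeriod))

lemma conj_iterate (c e : Perm (Fin m)) (x : Fin m) (j : ℕ) :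
    (c * e * c⁻¹)^[j] (c x) = c (e^[j] x) := by
  induction j with
  | zero => rfl
  | succ j ih =>
      rw [iterate_succ_apply', ih, iterate_succ_apply']
      simp [Perm.mul_apply]

lemma mp_conj (c e : Perm (Fin m)) (x : Fin m) :
    minimalPeriod ⇑(c * e * c⁻¹) (c x) = minimalPeriod ⇑e x :=
  mp_congr (mem_pp _ _) fun j => by
    rw [conj_iterate]
    exact ⟨fun h => c.injective h, fun h => by rw [h]⟩

lemma mp_sameCycle {e : Perm (Fin m)} {x y : Fin m} (h : e.SameCycle x y) :
    minimalPeriod ⇑e x = minimalPeriod ⇑e y := by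
  obtain ⟨i, _, hi⟩ := h.exists_pow_eq'
  have : y = e^[i] x := by rw [iterate_eq_pow, hi]
  rw [this, minimalPeriod_apply_iterate (mem_pp e x)]




-- `p = 0` case
lemma sig0_zero (e : Perm (Fin m)) : decomposeFin.symm ((0 : Fin (m+1)), e) 0 = 0 :=
  decomposeFin_symm_apply_zero 0 e

lemma sig0_succ (e : Perm (Fin m)) (x : Fin m) :
    decomposeFin.symm ((0 : Fin (m+1)), e) x.succ = (e x).succ := by
  rw [decomposeFin_symm_apply_succ, swap_self]
  rfl

lemma sig0_iter (e : Perm (Fin m)) (x : Fin m) (j : ℕ) :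
    (decomposeFin.symm ((0 : Fin (m+1)), e))^[j] x.succ = (e^[j] x).succ := by
  induction j with
  | zero => rfl
  | succ j ih => rw [iterate_succ_apply', ih, sig0_succ, iterate_succ_apply']

lemma sig0_mp_zero (e : Perm (Fin m)) :
    minimalPeriod ⇑(decomposeFin.symm ((0 : Fin (m+1)), e)) 0 = 1 :=
  minimalPeriod_eq_one_iff_isFixedPt.2 (sig0_zero e)

lemma sig0_mp_succ (e : Perm (Fin m)) (x : Fin m) :
    minimalPeriod ⇑(decomposeFin.symm ((0 : Fin (m+1)), e)) x.succ =
      minimalPeriod ⇑e x :=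
  mp_congr (mem_pp _ _) fun j => by
    rw [sig0_iter]
    exact ⟨fun h => Fin.succ_injective _ h, fun h => by rw [h]⟩

lemma sig0_sameCycle (e : Perm (Fin m)) (y : Fin (m+1)) :
    (decomposeFin.symm ((0 : Fin (m+1)), e)).SameCycle 0 y ↔ y = 0 := by
  constructor
  · rintro ⟨b, hb⟩
    rw [zpow_apply_eq_self_of_apply_eq_self (sig0_zero e)] at hb
    exact hb.symm
  · rintro rfl; exact SameCycle.refl _ _

-- `p = q.succ` case
lemma sig_zero (q : Fin m) (e : Perm (Fin m)) :
    decomposeFin.symm (q.succ, e) 0 = q.succ :=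
  decomposeFin_symm_apply_zero q.succ e

lemma sig_succ (q : Fin m) (e : Perm (Fin m)) (x : Fin m) :
    decomposeFin.symm (q.succ, e) x.succ =
      if e x = q then 0 else (e x).succ := by
  rw [decomposeFin_symm_apply_succ]
  split_ifs with h
  · rw [h, swap_apply_right]
  · exact swap_apply_of_ne_of_ne (Fin.succ_ne_zero _) (fun hc => h (Fin.succ_injective _ hc))

lemma sig_iter_notin {q x : Fin m} {e : Perm (Fin m)} (h : ¬ e.SameCycle q x) (j : ℕ) :
    (decomposeFin.symm (q.succ, e))^[j] x.succ = (e^[j] x).succ := by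
  induction j with
  | zero => rfl
  | succ j ih =>
      rw [iterate_succ_apply', ih, sig_succ, if_neg, iterate_succ_apply']
      intro hc
      exact h (SameCycle.symm ⟨(j+1 : ℕ), by
        rw [zpow_natCast, ← iterate_eq_pow, iterate_succ_apply', hc]⟩)

lemma sig_mp_notin {q x : Fin m} {e : Perm (Fin m)} (h : ¬ e.SameCycle q x) :
    minimalPeriod ⇑(decomposeFin.symm (q.succ, e)) x.succ = minimalPeriod ⇑e x :=
  mp_congr (mem_pp _ _) fun j => by
    rw [sig_iter_notin h]
    exact ⟨fun h => Fin.succ_injective _ h, fun h => by rw [h]⟩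

lemma sig_iter_zero (q : Fin m) (e : Perm (Fin m)) (j : ℕ)
    (hj : j < minimalPeriod ⇑e q) :
    (decomposeFin.symm (q.succ, e))^[j+1] 0 = (e^[j] q).succ := by
  induction j with
  | zero => simp only [zero_add, iterate_one, iterate_zero, id]; exact sig_zero q e
  | succ j ih =>
      rw [iterate_succ_apply', ih (Nat.lt_of_succ_lt hj), sig_succ, if_neg,
        iterate_succ_apply']
      intro hc
      have hper : IsPeriodicPt ⇑e (j+1) q := by
        rw [IsPeriodicPt, IsFixedPt, iterate_succ_apply', hc]
      have := hper.minimalPeriod_le (Nat.succ_pos j)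
      omega

lemma sig_mp_zero (q : Fin m) (e : Perm (Fin m)) :
    minimalPeriod ⇑(decomposeFin.symm (q.succ, e)) 0 = minimalPeriod ⇑e q + 1 := by
  have hkpos : 0 < minimalPeriod ⇑e q := mp_pos e q
  obtain ⟨k, hk⟩ : ∃ k, minimalPeriod ⇑e q = k + 1 := ⟨_, (Nat.succ_pred_eq_of_pos hkpos).symm⟩
  have hper : (decomposeFin.symm (q.succ, e))^[k+2] 0 = 0 := by
    rw [iterate_succ_apply', sig_iter_zero q e k (by omega), sig_succ, if_pos]
    have h5 : (⇑e)^[k+1] q = q := by rw [← hk]; exact iterate_minimalPeriod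
    rw [iterate_succ_apply'] at h5
    exact h5
  rw [hk]
  refine le_antisymm (IsPeriodicPt.minimalPeriod_le (by omega) hper) ?_
  by_contra h'
  push_neg at h'
  have h1 : 0 < minimalPeriod ⇑(decomposeFin.symm (q.succ, e)) 0 := mp_pos _ _
  obtain ⟨j, hj⟩ : ∃ j, minimalPeriod ⇑(decomposeFin.symm (q.succ, e)) 0 = j + 1 :=
    ⟨_, (Nat.succ_pred_eq_of_pos h1).symm⟩
  have h2 : (decomposeFin.symm (q.succ, e))^[j+1] 0 = 0 := by
    rw [← hj]; exact iterate_minimalPeriod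
  rw [sig_iter_zero q e j (by omega)] at h2
  exact Fin.succ_ne_zero _ h2

lemma sig_sameCycle {q x : Fin m} {e : Perm (Fin m)} (h : e.SameCycle q x) :
    (decomposeFin.symm (q.succ, e)).SameCycle 0 x.succ := by
  obtain ⟨i, _, hi⟩ := h.exists_pow_eq'
  have hk : 0 < minimalPeriod ⇑e q := mp_pos e q
  refine ⟨((i % minimalPeriod ⇑e q) + 1 : ℕ), ?_⟩
  rw [zpow_natCast, ← iterate_eq_pow,
    sig_iter_zero q e _ (Nat.mod_lt _ hk), iterate_mod_minimalPeriod_eq,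
    iterate_eq_pow, hi]

lemma sig_not_sameCycle {q x : Fin m} {e : Perm (Fin m)} (h : ¬ e.SameCycle q x) :
    ¬ (decomposeFin.symm (q.succ, e)).SameCycle 0 x.succ := by
  intro hc
  obtain ⟨i, _, hi⟩ := hc.symm.exists_pow_eq'
  rw [← iterate_eq_pow, sig_iter_notin h] at hi
  exact Fin.succ_ne_zero _ hi

lemma sig_mp_in {q x : Fin m} {e : Perm (Fin m)} (h : e.SameCycle q x) :
    minimalPeriod ⇑(decomposeFin.symm (q.succ, e)) x.succ =
      minimalPeriod ⇑e q + 1 := by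
  rw [← mp_sameCycle (sig_sameCycle h), sig_mp_zero]




/-- all cycles have length satisfying `P` -/
def All (P : ℕ → Prop) (σ : Perm (Fin m)) : Prop :=
  ∀ x, P (minimalPeriod ⇑σ x)

/-- the cycle of the marked point `q` satisfies `Q`, all others satisfy `P` -/
def Mk (P Q : ℕ → Prop) (q : Fin m) (e : Perm (Fin m)) : Prop :=
  ∀ x, (e.SameCycle q x → Q (minimalPeriod ⇑e x)) ∧
    (¬ e.SameCycle q x → P (minimalPeriod ⇑e x))

section Transfers

variable (P Q : ℕ → Prop)

lemma TL1 (e : Perm (Fin m)) :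
    All P (decomposeFin.symm ((0 : Fin (m+1)), e)) ↔ (P 1 ∧ All P e) := by
  constructor
  · intro h
    refine ⟨by simpa [sig0_mp_zero] using h 0, fun x => by simpa [sig0_mp_succ] using h x.succ⟩
  · rintro ⟨h1, h⟩ y
    induction y using Fin.cases with
    | zero => rwa [sig0_mp_zero]
    | succ x => rw [sig0_mp_succ]; exact h x

lemma TL2 (hflip : ∀ k, P (k+1) ↔ Q k) (q : Fin m) (e : Perm (Fin m)) :
    All P (decomposeFin.symm (q.succ, e)) ↔ Mk P Q q e := by
  constructor
  · intro h x
    constructor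
    · intro hx
      rw [mp_sameCycle hx.symm, ← hflip, ← sig_mp_zero q e]
      exact h 0
    · intro hx
      rw [← sig_mp_notin hx]
      exact h x.succ
  · intro h y
    induction y using Fin.cases with
    | zero =>
        rw [sig_mp_zero, hflip]
        exact (h q).1 (SameCycle.refl _ _)
    | succ x =>
        by_cases hx : e.SameCycle q x
        · rw [sig_mp_in hx, hflip]
          exact mp_sameCycle hx ▸ (h x).1 hx
        · rw [sig_mp_notin hx]
          exact (h x).2 hx

lemma TL3 (e : Perm (Fin m)) :
    Mk P Q 0 (decomposeFin.symm ((0 : Fin (m+1)), e)) ↔ (Q 1 ∧ All P e) := by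
  constructor
  · intro h
    constructor
    · simpa [sig0_mp_zero] using (h 0).1 (SameCycle.refl _ _)
    · intro x
      have := (h x.succ).2 (by rw [sig0_sameCycle]; exact Fin.succ_ne_zero x)
      rwa [sig0_mp_succ] at this
  · rintro ⟨h1, h⟩ y
    constructor
    · intro hy
      rw [(sig0_sameCycle e y).1 hy, sig0_mp_zero]
      exact h1
    · intro hy
      have hy0 : y ≠ 0 := fun hc => hy (by rw [hc])
      induction y using Fin.cases with
      | zero => exact absurd rfl hy0
      | succ x => rw [sig0_mp_succ]; exact h x

lemma TL4 (hflip : ∀ k, Q (k+1) ↔ P k) (q : Fin m) (e : Perm (Fin m)) :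
    Mk P Q 0 (decomposeFin.symm (q.succ, e)) ↔ All P e := by
  constructor
  · intro h x
    by_cases hx : e.SameCycle q x
    · rw [mp_sameCycle hx.symm, ← hflip, ← sig_mp_zero q e]
      exact (h 0).1 (SameCycle.refl _ _)
    · rw [← sig_mp_notin hx]
      exact (h x.succ).2 (sig_not_sameCycle hx)
  · intro h y
    constructor
    · intro hy
      induction y using Fin.cases with
      | zero => rw [sig_mp_zero, hflip]; exact h q
      | succ x =>
          have hx : e.SameCycle q x := by
            by_contra hc
            exact sig_not_sameCycle hc hy
          rw [sig_mp_in hx, hflip]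
          exact h q
    · intro hy
      induction y using Fin.cases with
      | zero => exact absurd (SameCycle.refl _ _) hy
      | succ x =>
          have hx : ¬ e.SameCycle q x := fun hc => hy (sig_sameCycle hc)
          rw [sig_mp_notin hx]
          exact h x

lemma TL5 (c : Perm (Fin m)) (q : Fin m) (e : Perm (Fin m)) :
    Mk P Q (c q) (c * e * c⁻¹) ↔ Mk P Q q e := by
  constructor
  · intro h x
    have := h (c x)
    rw [sameCycle_conj, (fun (f : Perm (Fin m)) (y : Fin m) => (Perm.inv_eq_iff_eq.mpr rfl : f⁻¹ (f y) = y)), (fun (f : Perm (Fin m)) (y : Fin m) => (Perm.inv_eq_iff_eq.mpr rfl : f⁻¹ (f y) = y)), mp_conj] at this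
    exact this
  · intro h y
    have hy : y = c (c⁻¹ y) := ((eq_symm_apply c).mp rfl : c (c⁻¹ y) = y).symm
    rw [hy, sameCycle_conj, (fun (f : Perm (Fin m)) (y : Fin m) => (Perm.inv_eq_iff_eq.mpr rfl : f⁻¹ (f y) = y)), (fun (f : Perm (Fin m)) (y : Fin m) => (Perm.inv_eq_iff_eq.mpr rfl : f⁻¹ (f y) = y)), mp_conj]
    exact h (c⁻¹ y)

end Transfers




-- counting helpers

lemma card_congr_prop {α : Type*} {P Q : α → Prop} (h : ∀ a, P a ↔ Q a) :
    Nat.card {a // P a} = Nat.card {a // Q a} :=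
  Nat.card_congr (Equiv.subtypeEquiv (Equiv.refl α) h)

lemma nat_card_sigma {ι : Type*} [Fintype ι] (T : ι → Type*) [∀ i, Finite (T i)] :
    Nat.card (Σ i, T i) = ∑ i, Nat.card (T i) := by
  classical
  letI : ∀ i, Fintype (T i) := fun i => Fintype.ofFinite _
  simp [Nat.card_eq_fintype_card, Fintype.card_sigma]

lemma card_step (R : Perm (Fin (m+1)) → Prop) :
    Nat.card {σ // R σ} =
      Nat.card {e : Perm (Fin m) // R (decomposeFin.symm (0, e))} +
      ∑ q : Fin m, Nat.card {e : Perm (Fin m) // R (decomposeFin.symm (q.succ, e))} := by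
  have e1 : {σ // R σ} ≃ Σ p : Fin (m+1), {e : Perm (Fin m) // R (decomposeFin.symm (p, e))} :=
    (decomposeFin.subtypeEquiv fun σ => iff_of_eq
      (congrArg R (decomposeFin.symm_apply_apply σ).symm)).trans
      (Equiv.subtypeProdEquivSigmaSubtype fun p e => R (decomposeFin.symm (p, e)))
  rw [Nat.card_congr e1, nat_card_sigma, Fin.sum_univ_succ]

lemma card_false {α : Type*} [Finite α] {P : α → Prop} (h : ∀ a, ¬ P a) :
    Nat.card {a // P a} = 0 := by
  have : IsEmpty {a // P a} := ⟨fun x => h x.1 x.2⟩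
  exact Nat.card_of_isEmpty

lemma card_mk_indep (P Q : ℕ → Prop) (q q' : Fin m) :
    Nat.card {e : Perm (Fin m) // Mk P Q q e} = Nat.card {e : Perm (Fin m) // Mk P Q q' e} := by
  set c : Perm (Fin m) := Equiv.swap q q' with hc
  have hcq : c q = q' := swap_apply_left q q'
  refine Nat.card_congr (Equiv.subtypeEquiv (MulAut.conj c).toEquiv fun e => ?_)
  show Mk P Q q e ↔ Mk P Q q' (c * e * c⁻¹)
  rw [← hcq, TL5]

-- the four counting quantities
noncomputable def cA (P : ℕ → Prop) (k : ℕ) : ℕ :=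
  Nat.card {σ : Perm (Fin k) // All P σ}

noncomputable def cM (P Q : ℕ → Prop) (k : ℕ) : ℕ :=
  Nat.card {σ : Perm (Fin (k+1)) // Mk P Q 0 σ}

lemma cA_zero (P : ℕ → Prop) : cA P 0 = 1 := by
  rw [cA, card_congr_prop (P := All P) (Q := fun _ => True)
    (fun σ => iff_of_true (fun x => x.elim0) trivial)]
  simp [Nat.card_eq_fintype_card]

lemma cA_succ (P Q : ℕ → Prop) (hP1 : P 1) (hflip : ∀ k, P (k+1) ↔ Q k) (k : ℕ) :
    cA P (k+2) = cA P (k+1) + (k+1) * cM P Q k := by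
  rw [cA, card_step]
  congr 1
  · rw [card_congr_prop (fun e => TL1 P e), card_congr_prop (Q := All P)
      (fun e => by simp [hP1]), cA]
  · rw [Finset.sum_congr rfl (fun q _ => card_congr_prop (fun e => TL2 P Q hflip q e)),
      Finset.sum_congr rfl (fun q _ => card_mk_indep P Q q 0)]
    simp [cM, mul_comm]

lemma cA_one (P : ℕ → Prop) (hP1 : P 1) : cA P 1 = 1 := by
  rw [cA, card_step]
  rw [card_congr_prop (fun e => TL1 P e), card_congr_prop
    (P := fun e => P 1 ∧ All P e) (Q := fun _ => True)
    (fun e => iff_of_true ⟨hP1, fun x => x.elim0⟩ trivial)]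
  simp [Nat.card_eq_fintype_card]

lemma cA_succ_notP1 (P Q : ℕ → Prop) (hP1 : ¬ P 1) (hflip : ∀ k, P (k+1) ↔ Q k) (k : ℕ) :
    cA P (k+2) = (k+1) * cM P Q k := by
  rw [cA, card_step]
  rw [card_congr_prop (fun e => TL1 P e), card_false (fun e h => hP1 h.1)]
  rw [Finset.sum_congr rfl (fun q _ => card_congr_prop (fun e => TL2 P Q hflip q e)),
    Finset.sum_congr rfl (fun q _ => card_mk_indep P Q q 0)]
  simp [cM, mul_comm]

lemma cA_one_notP1 (P : ℕ → Prop) (hP1 : ¬ P 1) : cA P 1 = 0 := by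
  rw [cA, card_step]
  rw [card_congr_prop (fun e => TL1 P e), card_false (fun e h => hP1 h.1)]
  simp

lemma cM_eq (P Q : ℕ → Prop) (hQ1 : Q 1) (hflip : ∀ k, Q (k+1) ↔ P k) (k : ℕ) :
    cM P Q k = (k+1) * cA P k := by
  rw [cM, card_step]
  rw [card_congr_prop (fun e => TL3 P Q e), card_congr_prop (Q := All P)
    (fun e => by simp [hQ1])]
  rw [Finset.sum_congr rfl (fun q _ => card_congr_prop (fun e => TL4 P Q hflip q e))]
  simp [cA]
  ring

lemma cM_eq_notQ1 (P Q : ℕ → Prop) (hQ1 : ¬ Q 1) (hflip : ∀ k, Q (k+1) ↔ P k) (k : ℕ) :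
    cM P Q k = k * cA P k := by
  rw [cM, card_step]
  rw [card_congr_prop (fun e => TL3 P Q e), card_false (fun e h => hQ1 h.1)]
  rw [Finset.sum_congr rfl (fun q _ => card_congr_prop (fun e => TL4 P Q hflip q e))]
  simp [cA]

lemma flipOE : ∀ k, Odd (k+1) ↔ Even k := fun k => by
  simp [Nat.odd_add_one, Nat.not_odd_iff_even]

lemma flipEO : ∀ k, Even (k+1) ↔ Odd k := fun k => by
  simp [Nat.even_add_one, Nat.not_even_iff_odd]

lemma AOrec (k : ℕ) : cA Odd (k+2) = cA Odd (k+1) + (k+1) * k * cA Odd k := by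
  rw [cA_succ Odd Even odd_one flipOE, cM_eq_notQ1 Odd Even (by decide) flipEO, mul_assoc]

lemma AErec (k : ℕ) : cA Even (k+2) = (k+1) * (k+1) * cA Even k := by
  rw [cA_succ_notP1 Even Odd (by decide) flipEO, cM_eq Even Odd odd_one flipOE, mul_assoc]

lemma dfact_odd (j : ℕ) : (2*j+1)‼ = (2*j+1) * (2*j-1)‼ := by
  have := Nat.doubleFactorial_add_one (2*j)
  simpa using this

lemma main_values (n : ℕ) :
    cA Odd (2*n) = ((2*n-1)‼)^2 ∧ cA Odd (2*n+1) = (2*n+1)‼ * (2*n-1)‼ ∧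
      cA Even (2*n) = ((2*n-1)‼)^2 := by
  induction n with
  | zero => simp [cA_zero, cA_one Odd odd_one]
  | succ n ih =>
      obtain ⟨h1, h2, h3⟩ := ih
      have e1 : 2*(n+1) = (2*n) + 2 := by ring
      have e2 : 2*(n+1) - 1 = 2*n+1 := by omega
      have e3 : 2*(n+1) + 1 = (2*n+1) + 2 := by ring
      have d1 : (2*n+1)‼ = (2*n+1) * (2*n-1)‼ := dfact_odd n
      have d2 : ((2*n+1)+2)‼ = (2*n+3) * (2*n+1)‼ := Nat.doubleFactorial_add_two (2*n+1)
      have hO2 : cA Odd (2*n+2) = ((2*n+1)‼)^2 := by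
        rw [AOrec, h1, h2, d1]; ring
      refine ⟨?_, ?_, ?_⟩
      · rw [e1, show 2*n+2-1 = 2*n+1 by omega, hO2]
      · rw [e3, e2, AOrec, d2, d1]
        rw [show (2*n+1)+1 = 2*n+2 from rfl, hO2, h2, d1]
        ring
      · rw [e1, show 2*n+2-1 = 2*n+1 by omega, AErec, h3, d1]; ring

end Stmt6


/-- `|Odd(2n)| = |Even(2n)| = ((2n-1)!!)^2`. -/
theorem stmt6 (n : ℕ) (hn : 1 ≤ n) :
    Nat.card {σ : Equiv.Perm (Fin (2 * n)) //
        ∀ x, Odd (Function.minimalPeriod ⇑σ x)} =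
      Nat.card {σ : Equiv.Perm (Fin (2 * n)) //
        ∀ x, Even (Function.minimalPeriod ⇑σ x)} ∧
    Nat.card {σ : Equiv.Perm (Fin (2 * n)) //
        ∀ x, Odd (Function.minimalPeriod ⇑σ x)} =
      (Nat.doubleFactorial (2 * n - 1)) ^ 2 := by
  obtain ⟨h1, -, h3⟩ := Stmt6.main_values n
  have e1 : Nat.card {σ : Equiv.Perm (Fin (2 * n)) //
      ∀ x, Odd (Function.minimalPeriod ⇑σ x)} = Stmt6.cA Odd (2*n) := rfl
  have e2 : Nat.card {σ : Equiv.Perm (Fin (2 * n)) //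
      ∀ x, Even (Function.minimalPeriod ⇑σ x)} = Stmt6.cA Even (2*n) := rfl
  rw [e1, e2, h1, h3]
  exact ⟨rfl, rfl⟩
end

section
/- For n ≥ 1 and k ≥ 1, the number of permutations of {1,...,2n} with all cycle lengths odd and with the element 1 in a cycle of length 2k-1 equals the number of permutations of {1,...,2n} with all cycles of odd length except that the cycle containing 1 has even length 2k; both equal (2n-1)!/(2n-2k)! · ((2n-2k-1)!!)^2. -/
open Function Equiv Finset

section
variable {α : Type*}

lemma perm_mem_periodicPts [Finite α] (σ : Equiv.Perm α) (x : α) :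
    x ∈ periodicPts ⇑σ := by
  refine mk_mem_periodicPts (orderOf_pos σ) ?_
  have : (σ ^ orderOf σ) x = x := by simp [pow_orderOf_eq_one]
  simpa [Function.IsPeriodicPt, Function.IsFixedPt, Equiv.Perm.iterate_eq_pow] using this

lemma perm_minPeriod_pos [Finite α] (σ : Equiv.Perm α) (x : α) :
    0 < Function.minimalPeriod ⇑σ x :=
  minimalPeriod_pos_of_mem_periodicPts (perm_mem_periodicPts σ x)

lemma perm_isPeriodicPt_iff (σ : Equiv.Perm α) (n : ℕ) (x : α) :
    Function.IsPeriodicPt ⇑σ n x ↔ (σ ^ n) x = x := by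
  simp [Function.IsPeriodicPt, Function.IsFixedPt, Equiv.Perm.iterate_eq_pow]

lemma perm_minPeriod_le [Fintype α] (σ : Equiv.Perm α) (x : α) :
    Function.minimalPeriod ⇑σ x ≤ Fintype.card α := by
  have hinj : Function.Injective (fun i : Fin (Function.minimalPeriod ⇑σ x) => (⇑σ)^[(i : ℕ)] x) := by
    intro i j hij
    exact Fin.ext (iterate_injOn_Iio_minimalPeriod (Set.mem_Iio.2 i.isLt) (Set.mem_Iio.2 j.isLt) hij)
  simpa using Fintype.card_le_of_injective _ hinj
end

def AllOddP {α : Type*} (σ : Equiv.Perm α) : Prop :=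
  ∀ y, Odd (Function.minimalPeriod ⇑σ y)

noncomputable def oddCount (m : ℕ) : ℕ :=
  Nat.card {σ : Equiv.Perm (Fin m) // AllOddP σ}

section
variable {α β : Type*}

lemma permCongr_pow_apply (e : α ≃ β) (σ : Equiv.Perm α) (n : ℕ) (y : α) :
    ((e.permCongr σ) ^ n) (e y) = e ((σ ^ n) y) := by
  induction n with
  | zero => simp
  | succ n ih => rw [pow_succ', pow_succ']; simp [Equiv.Perm.mul_apply, ih]

lemma minPeriod_permCongr (e : α ≃ β) (σ : Equiv.Perm α) (y : α) :
    Function.minimalPeriod ⇑(e.permCongr σ) (e y) = Function.minimalPeriod ⇑σ y := by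
  rw [Function.minimalPeriod_eq_minimalPeriod_iff]
  intro n
  simp only [Function.IsPeriodicPt, Function.IsFixedPt, Equiv.Perm.iterate_eq_pow]
  rw [permCongr_pow_apply]
  exact ⟨fun h => e.injective h, fun h => congrArg e h⟩

lemma card_allOdd (β : Type*) [Fintype β] :
    Nat.card {σ : Equiv.Perm β // AllOddP σ} = oddCount (Fintype.card β) := by
  classical
  set e := Fintype.equivFin β
  refine Nat.card_congr (Equiv.subtypeEquiv e.permCongr fun σ => ?_)
  constructor
  · intro h z
    have := h (e.symm z)
    rw [← minPeriod_permCongr e σ (e.symm z)] at this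
    simpa using this
  · intro h y
    have := h (e y)
    rwa [minPeriod_permCongr e σ y] at this
end

section
variable {α : Type*}

lemma card_startEmb [Fintype α] (x : α) (c' : ℕ) :
    Nat.card {v : Fin (c' + 1) ↪ α // v 0 = x} =
      (Fintype.card α - 1).descFactorial c' := by
  classical
  have hinj : ∀ w : Fin c' ↪ {y : α // y ≠ x},
      Function.Injective (fun j => Fin.cases (motive := fun _ => α) x (fun i => (w i : α)) j) := by
    intro w j1 j2 h
    induction j1 using Fin.cases with
    | zero =>
      induction j2 using Fin.cases with
      | zero => rfl
      | succ i2 => simp at h; exact absurd h.symm (w i2).2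
    | succ i1 =>
      induction j2 using Fin.cases with
      | zero => simp at h; exact absurd h (w i1).2
      | succ i2 =>
        simp only [Fin.cases_succ] at h
        exact congrArg Fin.succ (w.injective (Subtype.ext h))
  have key : {v : Fin (c' + 1) ↪ α // v 0 = x} ≃ (Fin c' ↪ {y : α // y ≠ x}) := by
    refine ⟨fun v => ⟨fun i => ⟨v.1 i.succ, fun h => Fin.succ_ne_zero i (v.1.injective (h.trans v.2.symm))⟩,
        fun i j hij => Fin.succ_injective _ (v.1.injective (congrArg Subtype.val hij))⟩,
      fun w => ⟨⟨fun j => Fin.cases (motive := fun _ => α) x (fun i => (w i : α)) j, hinj w⟩, by simp⟩, ?_, ?_⟩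
    · intro v
      ext j
      · induction j using Fin.cases with
        | zero => simpa using v.2.symm
        | succ i => simp; rfl
    · intro w
      ext i
      simp
  rw [Nat.card_congr key, Nat.card_eq_fintype_card, Fintype.card_embedding_eq]
  congr 1
  · simp [Fintype.card_subtype_compl]
  · simp
end

section Build
variable {α : Type*} {c' : ℕ} (v : Fin (c' + 1) ↪ α)
variable [DecidablePred (· ∈ Set.range ⇑v)]

noncomputable def buildPerm (τ : Equiv.Perm {y : α // y ∉ Set.range ⇑v}) : Equiv.Perm α :=
  Equiv.Perm.subtypeCongr
    (Equiv.permCongr (Equiv.ofInjective ⇑v v.injective) (finRotate (c' + 1))) τ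

variable (τ : Equiv.Perm {y : α // y ∉ Set.range ⇑v})

lemma buildPerm_apply_v (i : Fin (c' + 1)) : buildPerm v τ (v i) = v (i + 1) := by
  have h : v i ∈ Set.range ⇑v := Set.mem_range_self i
  rw [buildPerm, Equiv.Perm.subtypeCongr.left_apply _ _ h]
  have h1 : (Equiv.ofInjective ⇑v v.injective).symm ⟨v i, h⟩ = i := by
    rw [Equiv.symm_apply_eq]
    exact Subtype.ext (by simp [Equiv.ofInjective_apply])
  simp [Equiv.permCongr_apply, h1, finRotate_succ_apply, Equiv.ofInjective_apply]

lemma buildPerm_apply_notin {y : α} (h : y ∉ Set.range ⇑v) :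
    buildPerm v τ y = ↑(τ ⟨y, h⟩) := by
  rw [buildPerm, Equiv.Perm.subtypeCongr.right_apply _ _ h]

open Fin.NatCast in
lemma buildPerm_pow (j : ℕ) : ((buildPerm v τ) ^ j) (v 0) = v (j : Fin (c' + 1)) := by
  induction j with
  | zero => simp
  | succ j ih =>
    rw [pow_succ', Equiv.Perm.mul_apply, ih, buildPerm_apply_v]
    congr 1
    push_cast
    ring
end Build

section Build2
variable {α : Type*} {c' : ℕ} (v : Fin (c' + 1) ↪ α)
variable [DecidablePred (· ∈ Set.range ⇑v)]
variable (τ : Equiv.Perm {y : α // y ∉ Set.range ⇑v})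

lemma buildPerm_pow_notin (j : ℕ) (z : {y : α // y ∉ Set.range ⇑v}) :
    ((buildPerm v τ) ^ j) ↑z = ↑((τ ^ j) z) := by
  induction j with
  | zero => simp
  | succ j ih =>
    rw [pow_succ', pow_succ', Equiv.Perm.mul_apply, Equiv.Perm.mul_apply, ih,
      buildPerm_apply_notin v τ ((τ ^ j) z).2]

lemma buildPerm_orbit (hv0 : v 0 = x) (y : α) :
    (∀ i : ℕ, ((buildPerm v τ) ^ i) x ≠ y) ↔ y ∉ Set.range ⇑v := by
  subst hv0
  constructor
  · intro h hy
    obtain ⟨i, rfl⟩ := hy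
    exact h i (by rw [buildPerm_pow, Fin.cast_val_eq_self])
  · intro hy i hiy
    rw [buildPerm_pow] at hiy
    exact hy ⟨_, hiy⟩

lemma buildPerm_minPeriod_x (hv0 : v 0 = x) :
    Function.minimalPeriod ⇑(buildPerm v τ) x = c' + 1 := by
  subst hv0
  have hper : Function.IsPeriodicPt ⇑(buildPerm v τ) (c' + 1) (v 0) := by
    rw [perm_isPeriodicPt_iff, buildPerm_pow]
    norm_num
  refine le_antisymm (hper.minimalPeriod_le (Nat.succ_pos c')) ?_
  by_contra hlt
  push_neg at hlt
  have hpos : 0 < Function.minimalPeriod ⇑(buildPerm v τ) (v 0) :=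
    hper.minimalPeriod_pos (Nat.succ_pos c')
  have : ((buildPerm v τ) ^ (Function.minimalPeriod ⇑(buildPerm v τ) (v 0))) (v 0) = v 0 := by
    rw [← perm_isPeriodicPt_iff]
    exact Function.isPeriodicPt_minimalPeriod _ _
  rw [buildPerm_pow] at this
  have := v.injective this
  rw [Fin.natCast_eq_zero] at this
  exact absurd (Nat.le_of_dvd hpos this) (by omega)

lemma buildPerm_minPeriod_notin (z : {y : α // y ∉ Set.range ⇑v}) :
    Function.minimalPeriod ⇑(buildPerm v τ) ↑z = Function.minimalPeriod ⇑τ z := by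
  rw [Function.minimalPeriod_eq_minimalPeriod_iff]
  intro n
  rw [perm_isPeriodicPt_iff, perm_isPeriodicPt_iff, buildPerm_pow_notin]
  exact ⟨fun h => Subtype.ext h, fun h => congrArg _ h⟩
lemma buildPerm_mem {x : α} (hv0 : v 0 = x) (hτ : AllOddP τ) :
    Function.minimalPeriod ⇑(buildPerm v τ) x = c' + 1 ∧
      ∀ y, (∀ i : ℕ, ((buildPerm v τ) ^ i) x ≠ y) →
        Odd (Function.minimalPeriod ⇑(buildPerm v τ) y) := by
  refine ⟨buildPerm_minPeriod_x v τ hv0, fun y hy => ?_⟩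
  rw [buildPerm_orbit v τ hv0 y] at hy
  show Odd (Function.minimalPeriod ⇑(buildPerm v τ)
    ((⟨y, hy⟩ : {y : α // y ∉ Set.range ⇑v}) : α))
  rw [buildPerm_minPeriod_notin]
  exact hτ ⟨y, hy⟩

end Build2
section CardSset
variable {α : Type*}

lemma card_sset [Fintype α] (x : α) (c : ℕ) (hc : 1 ≤ c) :
    Nat.card {σ : Equiv.Perm α // Function.minimalPeriod ⇑σ x = c ∧
        ∀ y, (∀ i : ℕ, (σ ^ i) x ≠ y) → Odd (Function.minimalPeriod ⇑σ y)} =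
      (Fintype.card α - 1).descFactorial (c - 1) * oddCount (Fintype.card α - c) := by
  classical
  obtain ⟨c', rfl⟩ : ∃ c', c = c' + 1 := ⟨c - 1, by omega⟩
  have main : Nat.card {σ : Equiv.Perm α // Function.minimalPeriod ⇑σ x = c' + 1 ∧
        ∀ y, (∀ i : ℕ, (σ ^ i) x ≠ y) → Odd (Function.minimalPeriod ⇑σ y)} =
      Nat.card (Σ v : {v : Fin (c' + 1) ↪ α // v 0 = x},
        {τ : Equiv.Perm {y : α // y ∉ Set.range ⇑v.1} // AllOddP τ}) := by
    refine (Nat.card_eq_of_bijective (fun t => ⟨buildPerm t.1.1 t.2.1,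
        buildPerm_mem t.1.1 t.2.1 t.1.2 t.2.2⟩) ⟨?_, ?_⟩).symm
    · -- injective
      rintro ⟨⟨v1, hv1⟩, τ1, hτ1⟩ ⟨⟨v2, hv2⟩, τ2, hτ2⟩ h
      have hEq : buildPerm v1 τ1 = buildPerm v2 τ2 := congrArg Subtype.val h
      have hvv : v1 = v2 := by
        ext i
        have h1 := buildPerm_pow v1 τ1 (i : ℕ)
        have h2 := buildPerm_pow v2 τ2 (i : ℕ)
        rw [hv1] at h1
        rw [hv2] at h2
        rw [← hEq] at h2
        rw [Fin.cast_val_eq_self] at h1 h2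
        exact h1.symm.trans h2
      subst hvv
      have hττ : τ1 = τ2 := by
        apply Equiv.ext
        intro z
        have b1 := buildPerm_apply_notin v1 τ1 z.2
        have b2 := buildPerm_apply_notin v1 τ2 z.2
        rw [hEq] at b1
        exact Subtype.ext (b1.symm.trans b2)
      subst hττ
      rfl
    · -- surjective
      rintro ⟨σ, hper, hodd⟩
      have hinjv : Function.Injective (fun i : Fin (c' + 1) => (⇑σ)^[(i : ℕ)] x) := by
        intro i j hij
        refine Fin.ext (Function.iterate_injOn_Iio_minimalPeriod ?_ ?_ hij)
        · exact Set.mem_Iio.2 (by rw [hper]; exact i.isLt)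
        · exact Set.mem_Iio.2 (by rw [hper]; exact j.isLt)
      set vσ : Fin (c' + 1) ↪ α := ⟨fun i => (⇑σ)^[(i : ℕ)] x, hinjv⟩ with hvσ
      have hrange : ∀ y, y ∈ Set.range ⇑vσ ↔ ∃ i : ℕ, (⇑σ)^[i] x = y := by
        intro y
        constructor
        · rintro ⟨i, rfl⟩; exact ⟨(i : ℕ), rfl⟩
        · rintro ⟨i, rfl⟩
          refine ⟨⟨i % (c' + 1), Nat.mod_lt _ (Nat.succ_pos _)⟩, ?_⟩
          show (⇑σ)^[i % (c' + 1)] x = (⇑σ)^[i] x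
          rw [← hper]
          exact Function.iterate_mod_minimalPeriod_eq
      have hInv : ∀ y, (y ∉ Set.range ⇑vσ) ↔ (σ y ∉ Set.range ⇑vσ) := by
        intro y
        apply not_congr
        rw [hrange, hrange]
        constructor
        · rintro ⟨i, rfl⟩
          exact ⟨i + 1, Function.iterate_succ_apply' _ _ _⟩
        · rintro ⟨i, hi⟩
          refine ⟨i + c', σ.injective ?_⟩
          rw [← Function.iterate_succ_apply' σ (i + c') x]
          have h3 : (i + c').succ = i + (c' + 1) := by omega
          rw [h3, Function.iterate_add_apply, ← hper, Function.iterate_minimalPeriod, hi]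
      set τσ : Equiv.Perm {y : α // y ∉ Set.range ⇑vσ} := σ.subtypePerm (fun y => (hInv y).symm) with hτσ
      have hmp : ∀ z : {y : α // y ∉ Set.range ⇑vσ},
          Function.minimalPeriod ⇑τσ z = Function.minimalPeriod ⇑σ ↑z := by
        intro z
        rw [Function.minimalPeriod_eq_minimalPeriod_iff]
        intro m
        rw [perm_isPeriodicPt_iff, perm_isPeriodicPt_iff, hτσ, Equiv.Perm.subtypePerm_pow,
          Equiv.Perm.subtypePerm_apply, Subtype.ext_iff]
      have hAllOdd : AllOddP τσ := by
        intro z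
        rw [hmp]
        apply hodd
        intro i hi
        exact z.2 ((hrange ↑z).2 ⟨i, by simpa [Equiv.Perm.iterate_eq_pow] using hi⟩)
      refine ⟨⟨⟨vσ, by simp [hvσ]⟩, ⟨τσ, hAllOdd⟩⟩, ?_⟩
      apply Subtype.ext
      apply Equiv.ext
      intro y
      by_cases hy : y ∈ Set.range ⇑vσ
      · obtain ⟨i, rfl⟩ := hy
        rw [buildPerm_apply_v]
        show (⇑σ)^[((i + 1 : Fin (c' + 1)) : ℕ)] x = σ ((⇑σ)^[(i : ℕ)] x)
        have hstep : σ ((⇑σ)^[(i : ℕ)] x) = (⇑σ)^[(i : ℕ) + 1] x :=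
          (Function.iterate_succ_apply' ⇑σ (i : ℕ) x).symm
        rw [hstep]
        have key : ∀ a b : ℕ, a % (c' + 1) = b % (c' + 1) → (⇑σ)^[a] x = (⇑σ)^[b] x := by
          intro a b hab
          rw [← Function.iterate_mod_minimalPeriod_eq (n := a),
            ← Function.iterate_mod_minimalPeriod_eq (n := b), hper, hab]
        apply key
        rcases Nat.lt_or_ge (i.1 + 1) (c' + 1) with hlt | hge
        · have hne : (i + 1 : Fin (c' + 1)).val = i.val + 1 := by
            rw [Fin.val_add_one]
            split
            · next heq =>
              exfalso
              rw [heq] at hlt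
              simp [Fin.last] at hlt
            · rfl
          rw [hne]
        · have hlast : i = Fin.last c' := by
            apply Fin.ext
            have := i.isLt
            simp only [Fin.val_last]
            omega
          subst hlast
          rw [Fin.last_add_one]
          simp [Fin.val_last, Nat.mod_self]
      · rw [buildPerm_apply_notin vσ τσ hy]
        rfl
  rw [main, Nat.card_eq_fintype_card, Fintype.card_sigma]
  have hfib : ∀ v : {v : Fin (c' + 1) ↪ α // v 0 = x},
      Fintype.card {τ : Equiv.Perm {y : α // y ∉ Set.range ⇑v.1} // AllOddP τ} =
        oddCount (Fintype.card α - (c' + 1)) := by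
    intro v
    rw [← Nat.card_eq_fintype_card, card_allOdd]
    congr 1
    have e1 : Fintype.card {y : α // y ∈ Set.range ⇑v.1} = c' + 1 := by
      exact ((Fintype.card_congr (Equiv.ofInjective ⇑v.1 v.1.injective)).symm).trans
        (Fintype.card_fin _)
    have e2 := Fintype.card_subtype_compl (p := fun y : α => y ∈ Set.range ⇑v.1)
    omega
  rw [Finset.sum_congr rfl (fun v _ => hfib v), Finset.sum_const, smul_eq_mul, Finset.card_univ,
    ← Nat.card_eq_fintype_card (α := {v : Fin (c' + 1) ↪ α // v 0 = x}), card_startEmb]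
  simp

end CardSset
section Rec

lemma sum_odd_filter (N : ℕ) (f : ℕ → ℕ) :
    ∑ c ∈ (Finset.range N).filter (fun c => Odd c), f c =
      ∑ j ∈ Finset.range (N / 2), f (2 * j + 1) := by
  induction N with
  | zero => simp
  | succ N ih =>
    rw [Finset.range_add_one, Finset.filter_insert]
    by_cases hN : Odd N
    · rw [if_pos hN, Finset.sum_insert (by simp)]
      obtain ⟨j, hj⟩ := hN
      have h1 : (N + 1) / 2 = N / 2 + 1 := by omega
      have h2 : N / 2 = j := by omega
      rw [h1, Finset.sum_range_succ, ih, h2]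
      have h3 : 2 * j + 1 = N := by omega
      rw [h3]
      ring
    · have hNe : N % 2 = 0 := by
        rcases Nat.even_or_odd N with he | ho
        · exact Nat.even_iff.mp he
        · exact absurd ho hN
      have h1 : (N + 1) / 2 = N / 2 := by omega
      rw [if_neg hN, h1, ih]

lemma oddCount_zero : oddCount 0 = 1 := by
  have h2 : Subsingleton {σ : Equiv.Perm (Fin 0) // AllOddP σ} :=
    ⟨fun a b => Subtype.ext (Equiv.ext fun y => y.elim0)⟩
  have h1 : Nonempty {σ : Equiv.Perm (Fin 0) // AllOddP σ} := ⟨⟨1, fun y => y.elim0⟩⟩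
  exact Nat.card_eq_one_iff_unique.mpr ⟨h2, h1⟩

lemma oddCount_rec (m : ℕ) (hm : 1 ≤ m) :
    oddCount m = ∑ j ∈ Finset.range ((m + 1) / 2),
      (m - 1).descFactorial (2 * j) * oddCount (m - (2 * j + 1)) := by
  classical
  set x : Fin m := ⟨0, hm⟩ with hxdef
  rw [oddCount, Nat.card_eq_fintype_card, Fintype.card_subtype]
  rw [Finset.card_eq_sum_card_fiberwise (f := fun σ : Equiv.Perm (Fin m) => Function.minimalPeriod ⇑σ x)
    (t := (Finset.range (m + 1)).filter (fun c => Odd c))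
    (fun (σ : Equiv.Perm (Fin m)) hσ => by
      simp only [Finset.mem_coe, Finset.mem_filter, Finset.mem_univ, true_and] at hσ
      simp only [Finset.mem_coe, Finset.mem_filter, Finset.mem_range]
      constructor
      · have := perm_minPeriod_le σ x
        rw [Fintype.card_fin] at this
        omega
      · exact hσ x)]
  have hsum : ∀ c ∈ (Finset.range (m + 1)).filter (fun c => Odd c),
      ((Finset.univ.filter (fun σ : Equiv.Perm (Fin m) => AllOddP σ)).filter
        (fun σ : Equiv.Perm (Fin m) => Function.minimalPeriod ⇑σ x = c)).card =
      (m - 1).descFactorial (c - 1) * oddCount (m - c) := by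
    intro c hc
    simp only [Finset.mem_filter, Finset.mem_range] at hc
    obtain ⟨hcm, hcodd⟩ := hc
    rw [Finset.filter_filter]
    rw [← Fintype.card_subtype, ← Nat.card_eq_fintype_card]
    have heq : Nat.card {σ : Equiv.Perm (Fin m) //
          AllOddP σ ∧ Function.minimalPeriod ⇑σ x = c} =
        Nat.card {σ : Equiv.Perm (Fin m) // Function.minimalPeriod ⇑σ x = c ∧
          ∀ y, (∀ i : ℕ, (σ ^ i) x ≠ y) → Odd (Function.minimalPeriod ⇑σ y)} := by
      apply Nat.card_congr
      apply Equiv.subtypeEquivRight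
      intro σ
      constructor
      · rintro ⟨h1, h2⟩
        exact ⟨h2, fun y _ => h1 y⟩
      · rintro ⟨h1, h2⟩
        refine ⟨fun y => ?_, h1⟩
        by_cases hy : ∀ i : ℕ, (σ ^ i) x ≠ y
        · exact h2 y hy
        · push_neg at hy
          obtain ⟨i, rfl⟩ := hy
          have hit : Function.minimalPeriod ⇑σ ((⇑σ)^[i] x) = Function.minimalPeriod ⇑σ x :=
            Function.minimalPeriod_apply_iterate (perm_mem_periodicPts σ x) i
          have : Function.minimalPeriod ⇑σ ((σ ^ i) x) = Function.minimalPeriod ⇑σ x := by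
            simpa [Equiv.Perm.iterate_eq_pow] using hit
          rw [this, h1]
          exact hcodd
    rw [heq, card_sset x c (hcodd.pos), Fintype.card_fin]
  rw [Finset.sum_congr rfl hsum, sum_odd_filter]
  simp only [Nat.add_sub_cancel]

end Rec
section Closed

lemma oddCount_one : oddCount 1 = 1 := by
  rw [oddCount_rec 1 le_rfl]
  simp [oddCount_zero]

lemma oddCount_two : oddCount 2 = 1 := by
  rw [oddCount_rec 2 (by omega)]
  simp [oddCount_one]

lemma oddCount_step (m : ℕ) (hm : 1 ≤ m) :
    oddCount (m + 2) = oddCount (m + 1) + (m + 1) * m * oddCount m := by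
  obtain ⟨m', rfl⟩ : ∃ m', m = m' + 1 := ⟨m - 1, by omega⟩
  rw [oddCount_rec (m' + 1 + 2) (by omega)]
  have h2 : (m' + 1 + 2 + 1) / 2 = (m' + 1 + 1) / 2 + 1 := by omega
  rw [h2, Finset.sum_range_succ']
  have h0 : (m' + 1 + 2 - 1).descFactorial (2 * 0) * oddCount (m' + 1 + 2 - (2 * 0 + 1)) =
      oddCount (m' + 1 + 1) := by simp
  rw [h0]
  have hterm : ∀ j, (m' + 1 + 2 - 1).descFactorial (2 * (j + 1)) *
        oddCount (m' + 1 + 2 - (2 * (j + 1) + 1)) =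
      (m' + 1 + 1) * (m' + 1) *
        ((m' + 1 - 1).descFactorial (2 * j) * oddCount (m' + 1 - (2 * j + 1))) := by
    intro j
    have e1 : m' + 1 + 2 - 1 = m' + 1 + 1 := by omega
    have e2 : 2 * (j + 1) = (2 * j + 1) + 1 := by omega
    have e3 : m' + 1 + 2 - (2 * (j + 1) + 1) = m' + 1 - (2 * j + 1) := by omega
    have e4 : m' + 1 - 1 = m' := by omega
    rw [e1, e2]
    rw [show m' + 1 + 2 - (2 * j + 1 + 1 + 1) = m' + 1 - (2 * j + 1) from by omega]
    rw [e4, Nat.succ_descFactorial_succ, Nat.succ_descFactorial_succ]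
    ring
  rw [Finset.sum_congr rfl (fun j _ => hterm j), ← Finset.mul_sum,
    ← oddCount_rec (m' + 1) (by omega)]
  have h3 : (m' + 1 + 1) / 2 = (m' + 2) / 2 := by omega
  ring

lemma doubleFactorial_odd (j : ℕ) :
    Nat.doubleFactorial (2 * j + 1) = (2 * j + 1) * Nat.doubleFactorial (2 * j - 1) := by
  cases j with
  | zero => rfl
  | succ j =>
    have e1 : 2 * (j + 1) + 1 = (2 * j + 1) + 2 := by omega
    have e2 : 2 * (j + 1) - 1 = 2 * j + 1 := by omega
    rw [e1, e2, Nat.doubleFactorial_add_two]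

lemma oddCount_closed (j : ℕ) :
    oddCount (2 * j) = Nat.doubleFactorial (2 * j - 1) ^ 2 ∧
      oddCount (2 * j + 1) =
        Nat.doubleFactorial (2 * j + 1) * Nat.doubleFactorial (2 * j - 1) := by
  induction j with
  | zero =>
    constructor
    · simpa using oddCount_zero
    · simpa using oddCount_one
  | succ j ih =>
    obtain ⟨ihe, iho⟩ := ih
    have heven : oddCount (2 * (j + 1)) = Nat.doubleFactorial (2 * (j + 1) - 1) ^ 2 := by
      have e : 2 * (j + 1) - 1 = 2 * j + 1 := by omega
      rw [e]
      cases j with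
      | zero => simpa using oddCount_two
      | succ j' =>
        have e2 : 2 * (j' + 1 + 1) = 2 * (j' + 1) + 2 := by omega
        rw [e2, oddCount_step (2 * (j' + 1)) (by omega)]
        have e3 : 2 * (j' + 1) + 1 = 2 * j' + 3 := by omega
        have e4 : 2 * (j' + 1) - 1 = 2 * j' + 1 := by omega
        rw [ihe, iho, e4]
        rw [show 2 * (j' + 1) + 1 = 2 * (j' + 1) + 1 from rfl]
        have hdf1 : Nat.doubleFactorial (2 * (j' + 1) + 1) =
            (2 * (j' + 1) + 1) * Nat.doubleFactorial (2 * (j' + 1) - 1) :=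
          doubleFactorial_odd (j' + 1)
        rw [hdf1, e4]
        ring
    refine ⟨heven, ?_⟩
    have e7 : 2 * (j + 1) - 1 = 2 * j + 1 := by omega
    have hdf1 : Nat.doubleFactorial (2 * (j + 1) + 1) =
        (2 * (j + 1) + 1) * Nat.doubleFactorial (2 * (j + 1) - 1) :=
      doubleFactorial_odd (j + 1)
    have hdf2 : Nat.doubleFactorial (2 * j + 1) =
        (2 * j + 1) * Nat.doubleFactorial (2 * j - 1) := doubleFactorial_odd j
    rw [hdf1, e7, hdf2]
    have e5 : 2 * (j + 1) + 1 = (2 * j + 1) + 2 := by omega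
    rw [e5, oddCount_step (2 * j + 1) (by omega)]
    have e6 : 2 * j + 1 + 1 = 2 * (j + 1) := by omega
    rw [e6, heven, e7, hdf2, iho, hdf2]
    ring

end Closed
section Final

lemma card_Aset {α : Type*} [Fintype α] (x : α) (c : ℕ) (hc : Odd c) :
    Nat.card {σ : Equiv.Perm α // Function.minimalPeriod ⇑σ x = c ∧
        ∀ y, Odd (Function.minimalPeriod ⇑σ y)} =
      Nat.card {σ : Equiv.Perm α // Function.minimalPeriod ⇑σ x = c ∧
        ∀ y, (∀ i : ℕ, (σ ^ i) x ≠ y) → Odd (Function.minimalPeriod ⇑σ y)} := by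
  apply Nat.card_congr
  apply Equiv.subtypeEquivRight
  intro σ
  constructor
  · rintro ⟨h1, h2⟩
    exact ⟨h1, fun y _ => h2 y⟩
  · rintro ⟨h1, h2⟩
    refine ⟨h1, fun y => ?_⟩
    by_cases hy : ∀ i : ℕ, (σ ^ i) x ≠ y
    · exact h2 y hy
    · push_neg at hy
      obtain ⟨i, rfl⟩ := hy
      have hit : Function.minimalPeriod ⇑σ ((⇑σ)^[i] x) = Function.minimalPeriod ⇑σ x :=
        Function.minimalPeriod_apply_iterate (perm_mem_periodicPts σ x) i
      have : Function.minimalPeriod ⇑σ ((σ ^ i) x) = Function.minimalPeriod ⇑σ x := by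
        simpa [Equiv.Perm.iterate_eq_pow] using hit
      rw [this, h1]
      exact hc

/-- `|A_{2n,2k-1}| = |P_{2n,2k}| = (2n-1)!/(2n-2k)! · ((2n-2k-1)!!)^2`. -/
theorem stmt7 (n k : ℕ) (hn : 1 ≤ n) (hk : 1 ≤ k) (hkn : k ≤ n) :
    Nat.card {σ : Equiv.Perm (Fin (2 * n)) //
        Function.minimalPeriod ⇑σ (⟨0, by omega⟩ : Fin (2 * n)) = 2 * k - 1 ∧
          ∀ y, Odd (Function.minimalPeriod ⇑σ y)} =
      Nat.card {σ : Equiv.Perm (Fin (2 * n)) //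
        Function.minimalPeriod ⇑σ (⟨0, by omega⟩ : Fin (2 * n)) = 2 * k ∧
          ∀ y, (∀ i : ℕ, (σ ^ i) (⟨0, by omega⟩ : Fin (2 * n)) ≠ y) →
            Odd (Function.minimalPeriod ⇑σ y)} ∧
    Nat.card {σ : Equiv.Perm (Fin (2 * n)) //
        Function.minimalPeriod ⇑σ (⟨0, by omega⟩ : Fin (2 * n)) = 2 * k - 1 ∧
          ∀ y, Odd (Function.minimalPeriod ⇑σ y)} * Nat.factorial (2 * n - 2 * k) =
      Nat.factorial (2 * n - 1) * (Nat.doubleFactorial (2 * n - 2 * k - 1)) ^ 2 := by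
  set x : Fin (2 * n) := ⟨0, by omega⟩ with hxdef
  set j := n - k with hjdef
  have hcodd : Odd (2 * k - 1) := ⟨k - 1, by omega⟩
  have hA := (card_Aset x (2 * k - 1) hcodd).trans (card_sset x (2 * k - 1) (by omega))
  have hP := card_sset x (2 * k) (by omega)
  rw [Fintype.card_fin] at hA hP
  have e1 : 2 * n - (2 * k - 1) = 2 * j + 1 := by omega
  have e2 : 2 * n - 2 * k = 2 * j := by omega
  have e3 : 2 * k - 1 - 1 = 2 * k - 2 := by omega
  have e4 : 2 * k - 1 = (2 * k - 2) + 1 := by omega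
  have e5 : 2 * n - 1 - (2 * k - 2) = 2 * j + 1 := by omega
  rw [e1, e3] at hA
  rw [e2] at hP
  have oce : oddCount (2 * j) = Nat.doubleFactorial (2 * j - 1) ^ 2 := (oddCount_closed j).1
  have oco : oddCount (2 * j + 1) =
      (2 * j + 1) * Nat.doubleFactorial (2 * j - 1) ^ 2 := by
    rw [(oddCount_closed j).2, doubleFactorial_odd j]
    ring
  have hdF : (2 * n - 1).descFactorial (2 * k - 1) =
      (2 * j + 1) * (2 * n - 1).descFactorial (2 * k - 2) := by
    rw [e4, Nat.descFactorial_succ, e5]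
  constructor
  · rw [hA, hP, oce, oco, hdF]
    ring
  · rw [hA, oco]
    rw [e2]
    have hfd : Nat.factorial (2 * j + 1) * (2 * n - 1).descFactorial (2 * k - 2) =
        Nat.factorial (2 * n - 1) := by
      have h := Nat.factorial_mul_descFactorial (n := 2 * n - 1) (k := 2 * k - 2) (by omega)
      rwa [e5] at h
    calc (2 * n - 1).descFactorial (2 * k - 2) *
          ((2 * j + 1) * Nat.doubleFactorial (2 * j - 1) ^ 2) * Nat.factorial (2 * j)
        = (2 * j + 1) * Nat.factorial (2 * j) * (2 * n - 1).descFactorial (2 * k - 2) *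
            Nat.doubleFactorial (2 * j - 1) ^ 2 := by ring
      _ = Nat.factorial (2 * j + 1) * (2 * n - 1).descFactorial (2 * k - 2) *
            Nat.doubleFactorial (2 * j - 1) ^ 2 := by rw [Nat.factorial_succ]
      _ = Nat.factorial (2 * n - 1) * Nat.doubleFactorial (2 * j - 1) ^ 2 := by rw [hfd]

end Final
end

section
/- For n ≥ 1 and k ≥ 1, the number of permutations of {1,...,2n+1} whose cycles are all odd except that the cycle containing 1 has even length 2k equals the number of permutations of {1,...,2n+1} with all cycles odd and with 1 in a cycle of length 2k+1; both equal (2n)!/(2n-2k)! · ((2n-2k-1)!!)^2. -/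
open Equiv Function List

namespace Stmt8Aux

variable {β γ : Type*}

/-- minimal periods agree when periodic points correspond. -/
lemma minimalPeriod_eq_of_iff {f : β → β} {g : γ → γ} {x : β} {y : γ}
    (h : ∀ n, IsPeriodicPt f n x ↔ IsPeriodicPt g n y) :
    minimalPeriod f x = minimalPeriod g y := by
  rcases Nat.eq_zero_or_pos (minimalPeriod f x) with h0 | hp
  · rcases Nat.eq_zero_or_pos (minimalPeriod g y) with h0' | hp'
    · rw [h0, h0']
    · exfalso
      have : IsPeriodicPt f (minimalPeriod g y) x :=
        (h _).2 (isPeriodicPt_minimalPeriod g y)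
      have := this.minimalPeriod_pos hp'
      omega
  · have hgy : IsPeriodicPt g (minimalPeriod f x) y :=
      (h _).1 (isPeriodicPt_minimalPeriod f x)
    have h1 : minimalPeriod g y ≤ minimalPeriod f x := hgy.minimalPeriod_le hp
    have hp' : 0 < minimalPeriod g y := hgy.minimalPeriod_pos hp
    have hfx : IsPeriodicPt f (minimalPeriod g y) x :=
      (h _).2 (isPeriodicPt_minimalPeriod g y)
    exact le_antisymm (hfx.minimalPeriod_le hp') h1

lemma minimalPeriod_permCongr (e : β ≃ γ) (τ : Perm β) (y : β) :
    minimalPeriod ⇑(e.permCongr τ) (e y) = minimalPeriod ⇑τ y := by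
  have key : ∀ n (z : β), (⇑(e.permCongr τ))^[n] (e z) = e ((⇑τ)^[n] z) := by
    intro n
    induction n with
    | zero => simp
    | succ n ih => intro z; rw [iterate_succ_apply, iterate_succ_apply]
                   simp only [permCongr_apply, Equiv.symm_apply_apply]
                   exact ih (τ z)
  refine minimalPeriod_eq_of_iff fun n => ?_
  unfold IsPeriodicPt IsFixedPt
  rw [key]
  exact e.injective.eq_iff

/-- all cycles odd -/
def AllOdd (τ : Perm β) : Prop := ∀ y, Odd (minimalPeriod ⇑τ y)

lemma allOdd_permCongr (e : β ≃ γ) (τ : Perm β) :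
    AllOdd (e.permCongr τ) ↔ AllOdd τ := by
  constructor
  · intro h y
    have := h (e y)
    rwa [minimalPeriod_permCongr] at this
  · intro h y
    have := h (e.symm y)
    have h2 := minimalPeriod_permCongr e τ (e.symm y)
    rw [Equiv.apply_symm_apply] at h2
    rw [h2]; exact this

/-- number of all-odd permutations of `Fin m` -/
noncomputable def oddf (m : ℕ) : ℕ := Nat.card {σ : Perm (Fin m) // AllOdd σ}

lemma oddf_congr {β : Type*} (e : β ≃ Fin m) :
    Nat.card {σ : Perm β // AllOdd σ} = oddf m := by
  refine Nat.card_congr (Equiv.subtypeEquiv (e.permCongr) fun τ => ?_)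
  exact (allOdd_permCongr e τ).symm

lemma oddf_zero : oddf 0 = 1 := by
  rw [oddf, Nat.card_eq_one_iff_unique]
  have h : ∀ σ : Perm (Fin 0), AllOdd σ := fun σ y => y.elim0
  exact ⟨⟨fun a b => Subtype.ext (Subsingleton.elim _ _)⟩, ⟨1, h 1⟩⟩

/-- minimal period along the orbit -/
lemma minimalPeriod_pow_apply {β : Type*} (σ : Perm β) (x : β) (i : ℕ) :
    minimalPeriod ⇑σ ((σ ^ i) x) = minimalPeriod ⇑σ x := by
  refine minimalPeriod_eq_of_iff fun n => ?_
  unfold IsPeriodicPt IsFixedPt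
  simp only [← Equiv.Perm.coe_pow]
  have hcomm : (σ ^ n) ((σ ^ i) x) = (σ ^ i) ((σ ^ n) x) := by
    rw [← Equiv.Perm.mul_apply, ← Equiv.Perm.mul_apply, ← pow_add, ← pow_add, add_comm]
  rw [hcomm]
  exact (Equiv.injective _).eq_iff

lemma minimalPeriod_pos {β : Type*} [Fintype β] [DecidableEq β] (σ : Perm β) (x : β) :
    0 < minimalPeriod ⇑σ x := by
  have h : IsPeriodicPt ⇑σ (orderOf σ) x := by
    unfold IsPeriodicPt IsFixedPt
    rw [← Equiv.Perm.coe_pow, pow_orderOf_eq_one]; rfl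
  exact h.minimalPeriod_pos (orderOf_pos σ)

lemma minimalPeriod_le_card {β : Type*} [Fintype β] [DecidableEq β] (σ : Perm β) (x : β) :
    minimalPeriod ⇑σ x ≤ Fintype.card β := by
  have hinj := iterate_injOn_Iio_minimalPeriod (f := ⇑σ) (x := x)
  have : (Finset.range (minimalPeriod ⇑σ x)).card ≤ (Finset.univ : Finset β).card := by
    refine Finset.card_le_card_of_injOn (fun i => (⇑σ)^[i] x) (fun a _ => Finset.mem_univ _) ?_
    intro a ha b hb hab
    exact hinj (by simpa using ha) (by simpa using hb) hab
  simpa using this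

end Stmt8Aux
section Master

variable {N K : ℕ}

/-- the cycle list determined by an embedding -/
def lst (s : Fin K ↪ {x : Fin (N + 1) // x ≠ 0}) : List (Fin (N + 1)) :=
  (0 : Fin (N + 1)) :: List.ofFn (fun i => (s i).1)

lemma length_lst (s : Fin K ↪ {x : Fin (N + 1) // x ≠ 0}) : (lst s).length = K + 1 := by
  simp [lst]

lemma nodup_lst (s : Fin K ↪ {x : Fin (N + 1) // x ≠ 0}) : (lst s).Nodup := by
  rw [lst, List.nodup_cons]
  refine ⟨?_, ?_⟩
  · rw [List.mem_ofFn]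
    rintro ⟨i, hi⟩
    exact (s i).2 hi
  · rw [List.nodup_ofFn]
    intro i j hij
    exact s.injective (Subtype.ext hij)

lemma lst_getElem_zero (s : Fin K ↪ {x : Fin (N + 1) // x ≠ 0}) (h : 0 < (lst s).length) :
    (lst s)[0] = 0 := rfl

lemma lst_getElem_succ (s : Fin K ↪ {x : Fin (N + 1) // x ≠ 0}) (i : ℕ) (hi : i < K)
    (h : i + 1 < (lst s).length) : (lst s)[i + 1] = (s ⟨i, hi⟩).1 := by
  simp [lst]

/-- the reconstructed permutation -/
noncomputable def bigPerm (s : Fin K ↪ {x : Fin (N + 1) // x ≠ 0})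
    (τ : Equiv.Perm {x : Fin (N + 1) // x ∉ lst s}) : Equiv.Perm (Fin (N + 1)) :=
  (lst s).formPerm * Equiv.Perm.ofSubtype τ

lemma bigPerm_apply_mem (s : Fin K ↪ {x : Fin (N + 1) // x ≠ 0})
    (τ : Equiv.Perm {x : Fin (N + 1) // x ∉ lst s}) {x : Fin (N + 1)} (hx : x ∈ lst s) :
    bigPerm s τ x = (lst s).formPerm x := by
  rw [bigPerm, Equiv.Perm.mul_apply, Equiv.Perm.ofSubtype_apply_of_not_mem τ (not_not_intro hx)]

lemma bigPerm_apply_not_mem (s : Fin K ↪ {x : Fin (N + 1) // x ≠ 0})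
    (τ : Equiv.Perm {x : Fin (N + 1) // x ∉ lst s}) {x : Fin (N + 1)} (hx : x ∉ lst s) :
    bigPerm s τ x = (τ ⟨x, hx⟩).1 := by
  rw [bigPerm, Equiv.Perm.mul_apply, Equiv.Perm.ofSubtype_apply_of_mem τ hx]
  exact List.formPerm_apply_of_notMem (τ ⟨x, hx⟩).2

lemma bigPerm_pow_zero (s : Fin K ↪ {x : Fin (N + 1) // x ≠ 0})
    (τ : Equiv.Perm {x : Fin (N + 1) // x ∉ lst s}) (i : ℕ) :
    ((bigPerm s τ) ^ i) 0 = (lst s)[i % (K + 1)]'(by rw [length_lst]; exact Nat.mod_lt _ (Nat.succ_pos K)) := by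
  induction i with
  | zero => simp [lst_getElem_zero]
  | succ i ih =>
    rw [pow_succ', Equiv.Perm.mul_apply, ih,
      bigPerm_apply_mem s τ (List.getElem_mem _),
      List.formPerm_apply_getElem _ (nodup_lst s)]
    simp only [length_lst, Nat.mod_add_mod]

end Master
section Master2

variable {N K : ℕ}

lemma bigPerm_minimalPeriod_zero (s : Fin K ↪ {x : Fin (N + 1) // x ≠ 0})
    (τ : Equiv.Perm {x : Fin (N + 1) // x ∉ lst s}) :
    Function.minimalPeriod ⇑(bigPerm s τ) (0 : Fin (N + 1)) = K + 1 := by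
  have hpp : Function.IsPeriodicPt ⇑(bigPerm s τ) (K + 1) (0 : Fin (N + 1)) := by
    show (⇑(bigPerm s τ))^[K+1] 0 = 0
    rw [← Equiv.Perm.coe_pow, bigPerm_pow_zero]
    simp [lst_getElem_zero]
  have hle : Function.minimalPeriod ⇑(bigPerm s τ) 0 ≤ K + 1 :=
    hpp.minimalPeriod_le (Nat.succ_pos K)
  have hpos : 0 < Function.minimalPeriod ⇑(bigPerm s τ) 0 :=
    hpp.minimalPeriod_pos (Nat.succ_pos K)
  by_contra hne
  have hlt : Function.minimalPeriod ⇑(bigPerm s τ) 0 < K + 1 := lt_of_le_of_ne hle hne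
  have hper := Function.isPeriodicPt_minimalPeriod ⇑(bigPerm s τ) (0 : Fin (N + 1))
  have : ((bigPerm s τ) ^ (Function.minimalPeriod ⇑(bigPerm s τ) 0)) 0 = (0 : Fin (N + 1)) := by
    rw [Equiv.Perm.coe_pow]; exact hper
  rw [bigPerm_pow_zero] at this
  have h0 : (lst s)[0]'(by rw [length_lst]; exact Nat.succ_pos K) = (0 : Fin (N+1)) :=
    lst_getElem_zero s _
  have h2 := this.trans h0.symm
  have h3 := ((nodup_lst s).getElem_inj_iff).1 h2
  rw [Nat.mod_eq_of_lt hlt] at h3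
  omega

lemma bigPerm_orbit (s : Fin K ↪ {x : Fin (N + 1) // x ≠ 0})
    (τ : Equiv.Perm {x : Fin (N + 1) // x ∉ lst s}) (y : Fin (N + 1)) :
    (∀ i : ℕ, ((bigPerm s τ) ^ i) 0 ≠ y) ↔ y ∉ lst s := by
  constructor
  · intro h hy
    obtain ⟨j, hj, rfl⟩ := List.mem_iff_getElem.1 hy
    refine h j ?_
    rw [bigPerm_pow_zero]
    have : j % (K + 1) = j := Nat.mod_eq_of_lt (by rw [length_lst] at hj; exact hj)
    simp only [this]
  · intro hy i hi
    rw [bigPerm_pow_zero] at hi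
    exact hy (hi ▸ List.getElem_mem _)

lemma bigPerm_iter_coe (s : Fin K ↪ {x : Fin (N + 1) // x ≠ 0})
    (τ : Equiv.Perm {x : Fin (N + 1) // x ∉ lst s}) (n : ℕ) (z : {x : Fin (N + 1) // x ∉ lst s}) :
    (⇑(bigPerm s τ))^[n] z.1 = ((⇑τ)^[n] z).1 := by
  induction n generalizing z with
  | zero => rfl
  | succ n ih =>
    rw [Function.iterate_succ_apply, Function.iterate_succ_apply,
      bigPerm_apply_not_mem s τ z.2]
    exact ih (τ z)

lemma bigPerm_minimalPeriod_not_mem (s : Fin K ↪ {x : Fin (N + 1) // x ≠ 0})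
    (τ : Equiv.Perm {x : Fin (N + 1) // x ∉ lst s}) {y : Fin (N + 1)} (hy : y ∉ lst s) :
    Function.minimalPeriod ⇑(bigPerm s τ) y = Function.minimalPeriod ⇑τ ⟨y, hy⟩ := by
  refine Stmt8Aux.minimalPeriod_eq_of_iff fun n => ?_
  unfold Function.IsPeriodicPt Function.IsFixedPt
  rw [show (⇑(bigPerm s τ))^[n] y = ((⇑τ)^[n] ⟨y, hy⟩).1 from bigPerm_iter_coe s τ n ⟨y, hy⟩,
    Subtype.ext_iff]

end Master2
section Master3

open Stmt8Aux

variable {N K : ℕ}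

lemma bigPerm_pow_succ_zero (s : Fin K ↪ {x : Fin (N + 1) // x ≠ 0})
    (τ : Equiv.Perm {x : Fin (N + 1) // x ∉ lst s}) (i : Fin K) :
    ((bigPerm s τ) ^ (i.1 + 1)) 0 = (s i).1 := by
  rw [bigPerm_pow_zero]
  have h1 : (i.1 + 1) % (K + 1) = i.1 + 1 := Nat.mod_eq_of_lt (by omega)
  simp only [h1]
  rw [lst_getElem_succ s i.1 i.2]

/-- The subtype of permutations with cycle of `0` of length `K+1` and other cycles odd. -/
abbrev PCSet (N K : ℕ) :=
  {σ : Equiv.Perm (Fin (N + 1)) // Function.minimalPeriod ⇑σ (0 : Fin (N + 1)) = K + 1 ∧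
    ∀ y, (∀ i : ℕ, (σ ^ i) (0 : Fin (N + 1)) ≠ y) → Odd (Function.minimalPeriod ⇑σ y)}

/-- The sigma type of building data. -/
abbrev FibT (N K : ℕ) :=
  Σ s : Fin K ↪ {x : Fin (N + 1) // x ≠ 0},
    {τ : Equiv.Perm {x : Fin (N + 1) // x ∉ lst s} // AllOdd τ}

noncomputable def Φ : FibT N K → PCSet N K := fun p =>
  ⟨bigPerm p.1 p.2.1, bigPerm_minimalPeriod_zero _ _, fun y hy => by
    have hym := (bigPerm_orbit _ _ y).1 hy
    rw [bigPerm_minimalPeriod_not_mem _ _ hym]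
    exact p.2.2 _⟩

lemma Φ_inj : Function.Injective (Φ (N := N) (K := K)) := by
  rintro ⟨s, τ, hτ⟩ ⟨s', τ', hτ'⟩ h
  have hσ : bigPerm s τ = bigPerm s' τ' := congrArg Subtype.val h
  have hs : s = s' := by
    apply DFunLike.ext
    intro i
    apply Subtype.ext
    show (s i).1 = (s' i).1
    rw [← bigPerm_pow_succ_zero s τ i, ← bigPerm_pow_succ_zero s' τ' i, hσ]
  subst hs
  have hττ' : τ = τ' := by
    apply Equiv.ext
    intro z
    apply Subtype.ext
    show (τ ⟨z.1, z.2⟩).1 = (τ' ⟨z.1, z.2⟩).1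
    rw [← bigPerm_apply_not_mem s τ z.2, ← bigPerm_apply_not_mem s τ' z.2, hσ]
  subst hττ'
  rfl

lemma Φ_surj : Function.Surjective (Φ (N := N) (K := K)) := by
  rintro ⟨σ, hper, hodd⟩
  have hpow : ∀ (i : ℕ) (x : Fin (N + 1)), (σ ^ i) x = (⇑σ)^[i] x := fun i x => by
    rw [← Equiv.Perm.coe_pow]
  have hinj0 : ∀ i j, i < K + 1 → j < K + 1 → (σ ^ i) 0 = (σ ^ j) 0 → i = j := by
    intro i j hi hj hij
    refine Function.iterate_injOn_Iio_minimalPeriod (f := ⇑σ) (x := 0) ?_ ?_ ?_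
    · rw [hper]; exact hi
    · rw [hper]; exact hj
    · show (⇑σ)^[i] 0 = (⇑σ)^[j] 0
      rw [← hpow, ← hpow]; exact hij
  have hKper : (σ ^ (K + 1)) 0 = 0 := by
    rw [hpow, ← hper]; exact Function.iterate_minimalPeriod
  have hmod : ∀ j : ℕ, (σ ^ (j % (K + 1))) 0 = (σ ^ j) 0 := by
    intro j
    rw [hpow, hpow, ← hper]
    exact Function.iterate_mod_minimalPeriod_eq
  set sf : Fin K → {x : Fin (N + 1) // x ≠ 0} := fun i =>
    ⟨(σ ^ (i.1 + 1)) 0, fun h0 => by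
      have : i.1 + 1 = 0 := hinj0 _ 0 (by omega) (by omega) (by rw [h0, pow_zero]; rfl)
      omega⟩ with hsf
  have hsinj : Function.Injective sf := by
    intro i j hij
    have := hinj0 (i.1 + 1) (j.1 + 1) (by omega) (by omega) (congrArg Subtype.val hij)
    exact Fin.ext (by omega)
  set s : Fin K ↪ {x : Fin (N + 1) // x ≠ 0} := ⟨sf, hsinj⟩ with hs
  have hmem : ∀ x, x ∈ lst s ↔ ∃ j, j < K + 1 ∧ (σ ^ j) 0 = x := by
    intro x
    rw [lst, List.mem_cons, List.mem_ofFn]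
    constructor
    · rintro (rfl | ⟨i, hi⟩)
      · exact ⟨0, Nat.succ_pos K, by rw [pow_zero]; rfl⟩
      · exact ⟨i.1 + 1, by omega, hi⟩
    · rintro ⟨j, hj, rfl⟩
      rcases j with _ | i
      · left; rw [pow_zero]; rfl
      · right; exact ⟨⟨i, by omega⟩, rfl⟩
  have horb : ∀ j : ℕ, (σ ^ j) 0 ∈ lst s := by
    intro j
    rw [hmem]
    exact ⟨j % (K + 1), Nat.mod_lt _ (Nat.succ_pos K), hmod j⟩
  have hiff : ∀ x, (x ∉ lst s) ↔ (σ x ∉ lst s) := by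
    intro x
    rw [not_iff_not]
    constructor
    · intro hx
      obtain ⟨j, hj, rfl⟩ := (hmem x).1 hx
      have : σ ((σ ^ j) 0) = (σ ^ (j + 1)) 0 := by
        rw [pow_succ', Equiv.Perm.mul_apply]
      rw [this]; exact horb _
    · intro hx
      obtain ⟨j, hj, hjx⟩ := (hmem (σ x)).1 hx
      have h1 : (σ ^ (j + K + 1)) 0 = σ x := by
        have : (σ ^ (j + K + 1)) 0 = (σ ^ j) ((σ ^ (K + 1)) 0) := by
          rw [← Equiv.Perm.mul_apply, ← pow_add]; ring_nf
        rw [this, hKper, hjx]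
      have h2 : (σ ^ (j + K + 1)) 0 = σ ((σ ^ (j + K)) 0) := by
        rw [pow_succ', Equiv.Perm.mul_apply]
      have : x = (σ ^ (j + K)) 0 := σ.injective (by rw [← h1, h2])
      rw [this]; exact horb _
  set τ : Equiv.Perm {x : Fin (N + 1) // x ∉ lst s} := σ.subtypePerm (fun x => (hiff x).symm) with hτdef
  have hitτ : ∀ (n : ℕ) (z : {x : Fin (N + 1) // x ∉ lst s}),
      ((⇑τ)^[n] z).1 = (⇑σ)^[n] z.1 := by
    intro n
    induction n with
    | zero => intro z; rfl
    | succ n ih =>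
      intro z
      rw [Function.iterate_succ_apply, Function.iterate_succ_apply, ih (τ z)]
      rfl
  have hτodd : AllOdd τ := by
    intro z
    have hz : Function.minimalPeriod ⇑τ z = Function.minimalPeriod ⇑σ z.1 := by
      refine minimalPeriod_eq_of_iff fun n => ?_
      unfold Function.IsPeriodicPt Function.IsFixedPt
      rw [← hitτ n z, ← Subtype.ext_iff]
    rw [hz]
    exact hodd z.1 fun i hi => z.2 (hi ▸ horb i)
  refine ⟨⟨s, τ, hτodd⟩, Subtype.ext ?_⟩
  show bigPerm s τ = σ
  have hlg : ∀ (j : ℕ) (hj : j < K + 1),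
      (lst s)[j]'(by rw [length_lst]; exact hj) = (σ ^ j) 0 := by
    intro j hj
    rcases j with _ | i
    · rw [lst_getElem_zero s, pow_zero]; rfl
    · rw [lst_getElem_succ s i (by omega)]; rfl
  ext x
  by_cases hx : x ∈ lst s
  · obtain ⟨j, hj, rfl⟩ := (hmem x).1 hx
    rw [bigPerm_apply_mem s τ hx, ← hlg j hj, List.formPerm_apply_getElem _ (nodup_lst s)]
    simp only [length_lst]
    rw [hlg ((j + 1) % (K + 1)) (Nat.mod_lt _ (Nat.succ_pos K)), hmod (j + 1),
      pow_succ', Equiv.Perm.mul_apply, hlg j hj]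
  · rw [bigPerm_apply_not_mem s τ hx]
    rfl

end Master3
section Master4
open Stmt8Aux

lemma nat_card_sigma {ι : Type*} [Fintype ι] (f : ι → Type*) [∀ i, Finite (f i)] :
    Nat.card (Σ i, f i) = ∑ i, Nat.card (f i) := by
  classical
  letI : ∀ i, Fintype (f i) := fun i => Fintype.ofFinite _
  simp [Nat.card_eq_fintype_card]

lemma card_compl_lst {N K : ℕ} (hK : K ≤ N) (s : Fin K ↪ {x : Fin (N + 1) // x ≠ 0}) :
    Nat.card {x : Fin (N + 1) // x ∉ lst s} = N - K := by
  classical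
  rw [Nat.card_eq_fintype_card]
  have h1 : Fintype.card {x : Fin (N + 1) // x ∈ lst s} = K + 1 := by
    rw [Fintype.card_of_subtype (lst s).toFinset (fun x => List.mem_toFinset),
      List.toFinset_card_of_nodup (nodup_lst s), length_lst]
  have h2 := Fintype.card_subtype_compl (fun x : Fin (N + 1) => x ∈ lst s)
  simp only [h1, Fintype.card_fin] at h2
  exact h2.trans (by omega)

lemma master (N K : ℕ) (hK : K ≤ N) :
    Nat.card (PCSet N K) = N.descFactorial K * oddf (N - K) := by
  classical
  have hbij : Nat.card (FibT N K) = Nat.card (PCSet N K) :=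
    Nat.card_eq_of_bijective Φ ⟨Φ_inj, Φ_surj⟩
  rw [← hbij]
  rw [show (FibT N K) = (Σ s : Fin K ↪ {x : Fin (N + 1) // x ≠ 0},
      {τ : Equiv.Perm {x : Fin (N + 1) // x ∉ lst s} // AllOdd τ}) from rfl,
    nat_card_sigma]
  have hfib : ∀ s : Fin K ↪ {x : Fin (N + 1) // x ≠ 0},
      Nat.card {τ : Equiv.Perm {x : Fin (N + 1) // x ∉ lst s} // AllOdd τ} = oddf (N - K) := by
    intro s
    have hc : Fintype.card {x : Fin (N + 1) // x ∉ lst s} = N - K := by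
      rw [← Nat.card_eq_fintype_card]; exact card_compl_lst hK s
    exact oddf_congr (Fintype.equivFinOfCardEq hc)
  simp only [hfib]
  rw [Finset.sum_const, smul_eq_mul]
  congr 1
  rw [Finset.card_univ, Fintype.card_embedding_eq, Fintype.card_fin]
  congr 1
  have := Fintype.card_subtype_compl (fun x : Fin (N + 1) => x = 0)
  simp only [Fintype.card_subtype_eq, Fintype.card_fin] at this
  exact this.trans (by omega)

end Master4
section Partition
open Stmt8Aux

lemma partition_oddf (m : ℕ) :
    oddf (m + 1) = ∑ K ∈ (Finset.range (m + 1)).filter (fun K => Even K),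
      Nat.card (PCSet m K) := by
  classical
  rw [oddf, Nat.card_eq_fintype_card, Fintype.card_subtype]
  rw [Finset.card_eq_sum_card_fiberwise
    (f := fun σ : Equiv.Perm (Fin (m + 1)) => Function.minimalPeriod ⇑σ 0 - 1)
    (t := (Finset.range (m + 1)).filter (fun K => Even K)) ?_]
  · refine Finset.sum_congr rfl fun K hK => ?_
    simp only [Finset.mem_filter, Finset.mem_range] at hK
    rw [Nat.card_eq_fintype_card, Fintype.card_subtype]
    congr 1
    ext σ
    simp only [Finset.mem_filter, Finset.mem_univ, true_and]
    constructor
    · rintro ⟨hall, hfib⟩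
      have hpos : 0 < Function.minimalPeriod ⇑σ 0 := minimalPeriod_pos σ 0
      refine ⟨by omega, fun y _ => hall y⟩
    · rintro ⟨hper, hoff⟩
      have hall : AllOdd σ := by
        intro y
        by_cases hy : ∀ i : ℕ, (σ ^ i) (0 : Fin (m + 1)) ≠ y
        · exact hoff y hy
        · push_neg at hy
          obtain ⟨i, rfl⟩ := hy
          rw [minimalPeriod_pow_apply, hper]
          rcases hK.2 with ⟨t, rfl⟩
          exact ⟨t, by omega⟩
      exact ⟨hall, by omega⟩
  · intro σ hσ
    simp only [Finset.mem_coe, Finset.mem_filter, Finset.mem_univ, true_and] at hσ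
    have hpos : 0 < Function.minimalPeriod ⇑σ 0 := minimalPeriod_pos σ 0
    have hle : Function.minimalPeriod ⇑σ (0 : Fin (m + 1)) ≤ m + 1 := by
      have := minimalPeriod_le_card σ (0 : Fin (m + 1))
      simpa using this
    have hodd0 : Odd (Function.minimalPeriod ⇑σ (0 : Fin (m + 1))) := hσ 0
    simp only [Finset.mem_coe, Finset.mem_filter, Finset.mem_range]
    rcases hodd0 with ⟨t, ht⟩
    exact ⟨by omega, ⟨t, by omega⟩⟩

end Partition
section Arith
open Stmt8Aux Nat

/-- closed form -/
def Ffun (m : ℕ) : ℕ := if Even m then ((m - 1)‼) ^ 2 else m‼ * (m - 2)‼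

lemma Ffun_even (t : ℕ) : Ffun (2 * t) = ((2 * t - 1)‼) ^ 2 := by
  rw [Ffun, if_pos ⟨t, by ring⟩]

lemma Ffun_odd (t : ℕ) : Ffun (2 * t + 1) = (2 * t + 1)‼ * (2 * t - 1)‼ := by
  rw [Ffun, if_neg (by rw [Nat.even_iff]; omega)]
  have h : 2 * t + 1 - 2 = 2 * t - 1 := by omega
  rw [h]

lemma dfac_odd_succ (t : ℕ) : (2 * t + 1)‼ = (2 * t + 1) * (2 * t - 1)‼ := by
  cases t with
  | zero => rfl
  | succ t =>
    have h1 : 2 * (t + 1) + 1 = 2 * t + 1 + 2 := by ring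
    have h2 : 2 * (t + 1) - 1 = 2 * t + 1 := by omega
    rw [h1, h2, Nat.doubleFactorial_add_two]

lemma Ffun_odd_eq (t : ℕ) : Ffun (2 * t + 1) = (2 * t + 1) * Ffun (2 * t) := by
  rw [Ffun_odd, Ffun_even, dfac_odd_succ]; ring

lemma Ffun_rec (m : ℕ) : Ffun (m + 2) = (m + 1) * m * Ffun m + Ffun (m + 1) := by
  rcases Nat.even_or_odd m with ⟨t, rfl⟩ | ⟨t, rfl⟩
  · have h2 : t + t = 2 * t := by ring
    rw [h2]
    have h3 : 2 * t + 2 = 2 * (t + 1) := by ring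
    rw [h3, Ffun_even, Ffun_even, Ffun_odd]
    have h4 : 2 * (t + 1) - 1 = 2 * t + 1 := by omega
    rw [h4, dfac_odd_succ]
    ring
  · have h3 : 2 * t + 1 + 2 = 2 * (t + 1) + 1 := by ring
    have h4 : 2 * t + 1 + 1 = 2 * (t + 1) := by ring
    rw [h3, h4, Ffun_odd, Ffun_odd, Ffun_even]
    have h5 : 2 * (t + 1) - 1 = 2 * t + 1 := by omega
    have h6 : 2 * (t + 1) + 1 = (2 * t + 1) + 2 := by ring
    rw [h5, h6, Nat.doubleFactorial_add_two, dfac_odd_succ]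
    ring

lemma sum_id : ∀ m : ℕ, (∑ K ∈ (Finset.range (m + 1)).filter (fun K => Even K),
    m.descFactorial K * Ffun (m - K)) = Ffun (m + 1) := by
  intro m
  induction m using Nat.strong_induction_on with
  | _ m ih =>
    match m with
    | 0 => decide
    | 1 => decide
    | (m + 2) =>
      have hset : (Finset.range (m + 3)).filter (fun K => Even K) =
          insert 0 (((Finset.range (m + 1)).filter (fun K => Even K)).image (· + 2)) := by
        ext K
        simp only [Finset.mem_insert, Finset.mem_image, Finset.mem_filter, Finset.mem_range,
          Nat.even_iff]
        constructor
        · rintro ⟨hK, hE⟩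
          rcases Nat.eq_zero_or_pos K with rfl | hpos
          · exact Or.inl rfl
          · exact Or.inr ⟨K - 2, ⟨by omega, by omega⟩, by omega⟩
        · rintro (rfl | ⟨a, ⟨ha, hae⟩, rfl⟩)
          · exact ⟨by omega, by omega⟩
          · exact ⟨by omega, by omega⟩
      rw [hset, Finset.sum_insert (by simp)]
      rw [Finset.sum_image (fun a _ b _ h => by omega)]
      have hterm : ∀ K ∈ (Finset.range (m + 1)).filter (fun K => Even K),
          (m + 2).descFactorial (K + 2) * Ffun (m + 2 - (K + 2)) =
          (m + 2) * (m + 1) * (m.descFactorial K * Ffun (m - K)) := by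
        intro K _
        have h1 : m + 2 - (K + 2) = m - K := by omega
        rw [h1, Nat.succ_descFactorial_succ, Nat.succ_descFactorial_succ]
        ring
      rw [Finset.sum_congr rfl hterm, ← Finset.mul_sum, ih m (by omega)]
      simp only [Nat.descFactorial_zero, one_mul, Nat.sub_zero]
      have h : Ffun (m + 3) = (m + 2) * (m + 1) * Ffun (m + 1) + Ffun (m + 2) := by
        simpa [show m + 1 + 2 = m + 3 by omega, show m + 1 + 1 = m + 2 by omega]
          using Ffun_rec (m + 1)
      rw [show m + 2 + 1 = m + 3 from rfl, h]
      ring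

lemma oddf_eq_Ffun : ∀ m : ℕ, oddf m = Ffun m := by
  intro m
  induction m using Nat.strong_induction_on with
  | _ m ih =>
    match m with
    | 0 => rw [oddf_zero]; decide
    | (m + 1) =>
      rw [partition_oddf]
      have hterm : ∀ K ∈ (Finset.range (m + 1)).filter (fun K => Even K),
          Nat.card (PCSet m K) = m.descFactorial K * Ffun (m - K) := by
        intro K hK
        simp only [Finset.mem_filter, Finset.mem_range] at hK
        rw [master m K (by omega), ih (m - K) (by omega)]
      rw [Finset.sum_congr rfl hterm, sum_id]

end Arith
/-- `|P_{2n+1,2k}| = |A_{2n+1,2k+1}| = (2n)!/(2n-2k)! · ((2n-2k-1)!!)^2`. -/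
theorem stmt8 (n k : ℕ) (hn : 1 ≤ n) (hk : 1 ≤ k) (hkn : k ≤ n) :
    Nat.card {σ : Equiv.Perm (Fin (2 * n + 1)) //
        Function.minimalPeriod ⇑σ (0 : Fin (2 * n + 1)) = 2 * k ∧
          ∀ y, (∀ i : ℕ, (σ ^ i) (0 : Fin (2 * n + 1)) ≠ y) →
            Odd (Function.minimalPeriod ⇑σ y)} =
      Nat.card {σ : Equiv.Perm (Fin (2 * n + 1)) //
        Function.minimalPeriod ⇑σ (0 : Fin (2 * n + 1)) = 2 * k + 1 ∧
          ∀ y, Odd (Function.minimalPeriod ⇑σ y)} ∧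
    Nat.card {σ : Equiv.Perm (Fin (2 * n + 1)) //
        Function.minimalPeriod ⇑σ (0 : Fin (2 * n + 1)) = 2 * k ∧
          ∀ y, (∀ i : ℕ, (σ ^ i) (0 : Fin (2 * n + 1)) ≠ y) →
            Odd (Function.minimalPeriod ⇑σ y)} * Nat.factorial (2 * n - 2 * k) =
      Nat.factorial (2 * n) * (Nat.doubleFactorial (2 * n - 2 * k - 1)) ^ 2 := by
  set m := n - k with hm
  have h2m1 : 2 * n - (2 * k - 1) = 2 * m + 1 := by omega
  have h2m : 2 * n - 2 * k = 2 * m := by omega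
  have hP : Nat.card {σ : Equiv.Perm (Fin (2 * n + 1)) //
        Function.minimalPeriod ⇑σ (0 : Fin (2 * n + 1)) = 2 * k ∧
          ∀ y, (∀ i : ℕ, (σ ^ i) (0 : Fin (2 * n + 1)) ≠ y) →
            Odd (Function.minimalPeriod ⇑σ y)} = Nat.card (PCSet (2 * n) (2 * k - 1)) :=
    Nat.card_congr (Equiv.subtypeEquivRight fun σ => by
      rw [show 2 * k - 1 + 1 = 2 * k by omega])
  have hA : Nat.card {σ : Equiv.Perm (Fin (2 * n + 1)) //
        Function.minimalPeriod ⇑σ (0 : Fin (2 * n + 1)) = 2 * k + 1 ∧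
          ∀ y, Odd (Function.minimalPeriod ⇑σ y)} = Nat.card (PCSet (2 * n) (2 * k)) :=
    Nat.card_congr (Equiv.subtypeEquivRight fun σ => by
      constructor
      · rintro ⟨h1, h2⟩
        exact ⟨h1, fun y _ => h2 y⟩
      · rintro ⟨h1, h2⟩
        refine ⟨h1, fun y => ?_⟩
        by_cases hy : ∀ i : ℕ, (σ ^ i) (0 : Fin (2 * n + 1)) ≠ y
        · exact h2 y hy
        · push_neg at hy
          obtain ⟨i, rfl⟩ := hy
          rw [Stmt8Aux.minimalPeriod_pow_apply, h1]
          exact ⟨k, by omega⟩)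
  rw [hP, hA, master (2 * n) (2 * k - 1) (by omega), master (2 * n) (2 * k) (by omega),
    h2m1, h2m, oddf_eq_Ffun, oddf_eq_Ffun]
  constructor
  · have hdesc : (2 * n).descFactorial (2 * k) = (2 * m + 1) * (2 * n).descFactorial (2 * k - 1) := by
      conv_lhs => rw [show 2 * k = (2 * k - 1) + 1 by omega]
      rw [Nat.descFactorial_succ, h2m1]
    rw [Ffun_odd_eq m, hdesc]
    ring
  · have hdf : Nat.factorial (2 * m + 1) * (2 * n).descFactorial (2 * k - 1) = Nat.factorial (2 * n) := by
      have h := Nat.factorial_mul_descFactorial (show 2 * k - 1 ≤ 2 * n by omega)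
      rwa [h2m1] at h
    rw [Ffun_odd m, dfac_odd_succ m, ← hdf, Nat.factorial_succ]
    ring
end

section
/- For all r ≥ 2 and m ≥ 1, |Reg_r(rm)| = (rm-1) · (rm-1)(rm-2)⋯(rm-r+1) · |Reg_r(rm-r)|, where the middle factor is the falling factorial (rm-1)_{r-1}. -/
open Equiv Function

namespace Stmt12

instance {γ : Type*} [Finite γ] : Finite (Option γ) :=
  Finite.of_equiv (γ ⊕ (PUnit : Type)) (Equiv.optionEquivSumPUnit γ).symm

variable {α β : Type*}

lemma mem_pp [Finite α] (σ : Equiv.Perm α) (x : α) : x ∈ periodicPts ⇑σ := by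
  refine ⟨orderOf σ, orderOf_pos σ, ?_⟩
  show (⇑σ)^[orderOf σ] x = x
  rw [Equiv.Perm.iterate_eq_pow, pow_orderOf_eq_one]; rfl

lemma mp_pos [Finite α] (σ : Equiv.Perm α) (x : α) : 0 < minimalPeriod ⇑σ x :=
  minimalPeriod_pos_of_mem_periodicPts (mem_pp σ x)

lemma sameCycle_iff_nat [Finite α] {σ : Equiv.Perm α} {x y : α} :
    σ.SameCycle x y ↔ ∃ k : ℕ, (σ ^ k) x = y := by
  constructor
  · intro h
    obtain ⟨i, _, hi⟩ := h.exists_pow_eq'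
    exact ⟨i, hi⟩
  · rintro ⟨k, hk⟩
    exact ⟨(k : ℤ), by rwa [zpow_natCast]⟩

lemma mp_of_sameCycle [Finite α] {σ : Equiv.Perm α} {x y : α} (h : σ.SameCycle x y) :
    minimalPeriod ⇑σ x = minimalPeriod ⇑σ y := by
  obtain ⟨k, hk⟩ := sameCycle_iff_nat.1 h
  have := minimalPeriod_apply_iterate (mem_pp σ x) k
  rw [Equiv.Perm.iterate_eq_pow, hk] at this
  exact this.symm

lemma permCongr_pow_apply (e : α ≃ β) (τ : Equiv.Perm α) (n : ℕ) (x : α) :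
    ((e.permCongr τ) ^ n) (e x) = e ((τ ^ n) x) := by
  induction n with
  | zero => simp
  | succ n ih =>
    rw [pow_succ', pow_succ', Equiv.Perm.mul_apply, Equiv.Perm.mul_apply, ih]
    simp

lemma mp_permCongr (e : α ≃ β) (τ : Equiv.Perm α) (x : α) :
    minimalPeriod ⇑(e.permCongr τ) (e x) = minimalPeriod ⇑τ x := by
  rw [minimalPeriod_eq_minimalPeriod_iff]
  intro n
  show (⇑(e.permCongr τ))^[n] (e x) = e x ↔ (⇑τ)^[n] x = x
  rw [Equiv.Perm.iterate_eq_pow, Equiv.Perm.iterate_eq_pow, permCongr_pow_apply]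
  exact ⟨fun h => e.injective h, fun h => by rw [h]⟩

lemma sameCycle_permCongr [Finite α] (e : α ≃ β) (τ : Equiv.Perm α) (x y : α) :
    (e.permCongr τ).SameCycle (e x) (e y) ↔ τ.SameCycle x y := by
  have : Finite β := Finite.of_equiv α e
  rw [sameCycle_iff_nat, sameCycle_iff_nat]
  constructor
  · rintro ⟨k, hk⟩
    exact ⟨k, e.injective (by rw [← permCongr_pow_apply e τ k x, hk])⟩
  · rintro ⟨k, hk⟩
    exact ⟨k, by rw [permCongr_pow_apply, hk]⟩


variable {α β : Type*}

noncomputable def Afree (r : ℕ) (α : Type*) : ℕ :=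
  Nat.card {σ : Equiv.Perm α // ∀ x, ¬ r ∣ Function.minimalPeriod ⇑σ x}

def GCond (r s : ℕ) {α : Type*} (x0 : α) (τ : Equiv.Perm α) : Prop :=
  (∀ x, r ∣ Function.minimalPeriod ⇑τ x → τ.SameCycle x0 x) ∧
    Function.minimalPeriod ⇑τ x0 % r = s % r

noncomputable def Gcnt (r s : ℕ) (α : Type*) (x0 : α) : ℕ :=
  Nat.card {τ : Equiv.Perm α // GCond r s x0 τ}


lemma Afree_congr (r : ℕ) (e : α ≃ β) : Afree r α = Afree r β := by
  refine Nat.card_congr (Equiv.subtypeEquiv e.permCongr ?_)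
  intro τ
  constructor
  · intro h y
    have := mp_permCongr e τ (e.symm y)
    rw [Equiv.apply_symm_apply] at this
    rw [this]; exact h _
  · intro h x
    have := h (e x)
    rwa [mp_permCongr] at this

lemma Gcnt_congr [Finite α] (r s : ℕ) (e : α ≃ β) (x0 : α) :
    Gcnt r s α x0 = Gcnt r s β (e x0) := by
  refine Nat.card_congr (Equiv.subtypeEquiv e.permCongr ?_)
  intro τ
  unfold GCond
  constructor
  · rintro ⟨h1, h2⟩
    refine ⟨fun y hy => ?_, ?_⟩
    · have hmp := mp_permCongr e τ (e.symm y)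
      rw [Equiv.apply_symm_apply] at hmp
      have := h1 (e.symm y) (by rwa [← hmp])
      have := (sameCycle_permCongr e τ x0 (e.symm y)).2 this
      rwa [Equiv.apply_symm_apply] at this
    · rwa [mp_permCongr]
  · rintro ⟨h1, h2⟩
    refine ⟨fun x hx => ?_, ?_⟩
    · exact (sameCycle_permCongr e τ x0 x).1 (h1 (e x) (by rwa [mp_permCongr]))
    · rwa [mp_permCongr] at h2

lemma Gcnt_point [Finite α] (r s : ℕ) (x0 x1 : α) :
    Gcnt r s α x0 = Gcnt r s α x1 := by
  classical
  have := Gcnt_congr (α := α) (β := α) r s (Equiv.swap x0 x1) x0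
  rwa [Equiv.swap_apply_left] at this

lemma nat_card_sigma {ι : Type*} [Fintype ι] (f : ι → Type*) [∀ i, Finite (f i)] :
    Nat.card (Σ i, f i) = ∑ i, Nat.card (f i) := by
  classical
  have := fun i => Fintype.ofFinite (f i)
  simp [Nat.card_eq_fintype_card]

lemma card_partition {γ : Type*} [Finite γ] (P : γ → Prop) (f : γ → ℕ) (S : Finset ℕ)
    (h : ∀ a, P a → f a ∈ S) :
    Nat.card {a // P a} = ∑ s ∈ S, Nat.card {a // P a ∧ f a = s} := by
  classical
  have : Fintype γ := Fintype.ofFinite γ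
  simp only [Nat.card_eq_fintype_card, Fintype.card_subtype]
  rw [Finset.card_eq_sum_card_fiberwise (f := f) (t := S)
    (fun x hx => h x (Finset.mem_filter.1 hx).2)]
  refine Finset.sum_congr rfl fun s _ => ?_
  congr 1
  rw [Finset.filter_filter]

lemma Afree_zero (r : ℕ) : Afree r (Fin 0) = 1 := by
  have hs : Subsingleton (Equiv.Perm (Fin 0)) := ⟨fun a b => Equiv.ext fun x => x.elim0⟩
  have hne : Nonempty {σ : Equiv.Perm (Fin 0) // ∀ x, ¬ r ∣ minimalPeriod ⇑σ x} :=
    ⟨⟨1, fun x => x.elim0⟩⟩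
  exact Nat.card_unique


variable {α : Type*} [DecidableEq α]

def ins (x0 : α) (τ : Equiv.Perm α) : Equiv.Perm (Option α) :=
  Equiv.swap none (some x0) * Equiv.optionCongr τ

@[simp] lemma ins_none (x0 : α) (τ : Equiv.Perm α) : (ins x0 τ) none = some x0 := by
  simp [ins]

lemma ins_some (x0 : α) (τ : Equiv.Perm α) (x : α) :
    (ins x0 τ) (some x) = if τ x = x0 then none else some (τ x) := by
  by_cases h : τ x = x0 <;> simp [ins, h, Equiv.swap_apply_of_ne_of_ne]

lemma ins_pow_none (x0 : α) (τ : Equiv.Perm α) {k : ℕ}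
    (hk : k < minimalPeriod ⇑τ x0) : ((ins x0 τ) ^ (k+1)) none = some ((τ ^ k) x0) := by
  induction k with
  | zero => simp
  | succ k ih =>
    have hk' : k < minimalPeriod ⇑τ x0 := Nat.lt_of_succ_lt hk
    rw [pow_succ', Equiv.Perm.mul_apply, ih hk', ins_some]
    have hne : τ ((τ ^ k) x0) ≠ x0 := by
      intro h
      have : IsPeriodicPt ⇑τ (k+1) x0 := by
        show (⇑τ)^[k+1] x0 = x0
        rw [Equiv.Perm.iterate_eq_pow, pow_succ', Equiv.Perm.mul_apply, h]
      exact not_isPeriodicPt_of_pos_of_lt_minimalPeriod (Nat.succ_ne_zero k) hk this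
    rw [if_neg hne]
    congr 1
    rw [pow_succ', Equiv.Perm.mul_apply]


lemma ins_pow_mp_none [Finite α] (x0 : α) (τ : Equiv.Perm α) :
    ((ins x0 τ) ^ (minimalPeriod ⇑τ x0 + 1)) none = none := by
  set l := minimalPeriod ⇑τ x0 with hl
  have hlpos : 0 < l := mp_pos τ x0
  obtain ⟨k, hkl⟩ : ∃ k, l = k + 1 := ⟨l - 1, by omega⟩
  have h1 : ((ins x0 τ) ^ (k+1)) none = some ((τ ^ k) x0) :=
    ins_pow_none x0 τ (by omega)
  have h2 : τ ((τ ^ k) x0) = x0 := by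
    have hper : (⇑τ)^[l] x0 = x0 := iterate_minimalPeriod
    rw [Equiv.Perm.iterate_eq_pow] at hper
    rw [← Equiv.Perm.mul_apply, ← pow_succ', ← hkl]
    exact hper
  rw [hkl, pow_succ', Equiv.Perm.mul_apply, h1, ins_some, if_pos h2]

lemma mp_ins_none [Finite α] (x0 : α) (τ : Equiv.Perm α) :
    minimalPeriod ⇑(ins x0 τ) none = minimalPeriod ⇑τ x0 + 1 := by
  set l := minimalPeriod ⇑τ x0 with hl
  have hper : IsPeriodicPt ⇑(ins x0 τ) (l + 1) none := by
    show (⇑(ins x0 τ))^[l+1] none = none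
    rw [Equiv.Perm.iterate_eq_pow]
    exact ins_pow_mp_none x0 τ
  have hle : minimalPeriod ⇑(ins x0 τ) none ≤ l + 1 :=
    hper.minimalPeriod_le (Nat.succ_pos l)
  have hpos : 0 < minimalPeriod ⇑(ins x0 τ) none := mp_pos _ _
  rcases Nat.lt_or_ge (minimalPeriod ⇑(ins x0 τ) none) (l+1) with h | h
  · exfalso
    obtain ⟨k, hk⟩ : ∃ k, minimalPeriod ⇑(ins x0 τ) none = k + 1 :=
      ⟨minimalPeriod ⇑(ins x0 τ) none - 1, by omega⟩
    have h2 : ((ins x0 τ) ^ (k+1)) none = some ((τ ^ k) x0) :=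
      ins_pow_none x0 τ (by omega)
    have h3 : ((ins x0 τ) ^ (k+1)) none = none := by
      rw [← hk, ← Equiv.Perm.iterate_eq_pow]
      exact iterate_minimalPeriod
    rw [h2] at h3
    exact Option.some_ne_none _ h3
  · omega

lemma ins_sameCycle [Finite α] (x0 : α) (τ : Equiv.Perm α) (x : α) :
    (ins x0 τ).SameCycle none (some x) ↔ τ.SameCycle x0 x := by
  set l := minimalPeriod ⇑τ x0 with hl
  have hlpos : 0 < l := mp_pos τ x0
  constructor
  · intro h
    obtain ⟨i, hi⟩ := sameCycle_iff_nat.1 h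
    have hmod : ((ins x0 τ) ^ (i % (l+1))) none = some x := by
      have := iterate_mod_minimalPeriod_eq (f := ⇑(ins x0 τ)) (x := none) (n := i)
      rw [mp_ins_none, Equiv.Perm.iterate_eq_pow, Equiv.Perm.iterate_eq_pow] at this
      rw [← hl] at this
      rw [this, hi]
    have hne : i % (l+1) ≠ 0 := by
      intro h0
      rw [h0] at hmod
      simp at hmod
    obtain ⟨k, hk⟩ : ∃ k, i % (l+1) = k + 1 := ⟨i % (l+1) - 1, by omega⟩
    have hklt : k < l := by have := Nat.mod_lt i (show 0 < l+1 by omega); omega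
    rw [hk, ins_pow_none x0 τ hklt] at hmod
    exact sameCycle_iff_nat.2 ⟨k, Option.some_injective _ hmod⟩
  · intro h
    obtain ⟨i, hi⟩ := sameCycle_iff_nat.1 h
    have hmod : (τ ^ (i % l)) x0 = x := by
      have := iterate_mod_minimalPeriod_eq (f := ⇑τ) (x := x0) (n := i)
      rw [Equiv.Perm.iterate_eq_pow, Equiv.Perm.iterate_eq_pow, ← hl] at this
      rw [this, hi]
    exact sameCycle_iff_nat.2 ⟨i % l + 1, by
      rw [ins_pow_none x0 τ (Nat.mod_lt i hlpos), hmod]⟩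

lemma ins_pow_some (x0 : α) (τ : Equiv.Perm α) {x : α} (hx : ¬ τ.SameCycle x0 x) (k : ℕ) :
    ((ins x0 τ) ^ k) (some x) = some ((τ ^ k) x) := by
  induction k with
  | zero => simp
  | succ k ih =>
    rw [pow_succ', Equiv.Perm.mul_apply, ih, ins_some]
    have hne : τ ((τ ^ k) x) ≠ x0 := by
      intro h
      exact hx (Equiv.Perm.SameCycle.symm ⟨(k+1 : ℕ), by
        rw [zpow_natCast, pow_succ', Equiv.Perm.mul_apply, h]⟩)
    rw [if_neg hne, pow_succ', Equiv.Perm.mul_apply]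

lemma mp_ins_some [Finite α] (x0 : α) (τ : Equiv.Perm α) {x : α} (hx : ¬ τ.SameCycle x0 x) :
    minimalPeriod ⇑(ins x0 τ) (some x) = minimalPeriod ⇑τ x := by
  rw [minimalPeriod_eq_minimalPeriod_iff]
  intro n
  show (⇑(ins x0 τ))^[n] (some x) = some x ↔ (⇑τ)^[n] x = x
  rw [Equiv.Perm.iterate_eq_pow, Equiv.Perm.iterate_eq_pow, ins_pow_some x0 τ hx]
  exact ⟨fun h => Option.some_injective _ h, fun h => by rw [h]⟩


lemma mod_shift {r l s : ℕ} (hr : 1 ≤ r) : (l + 1) % r = s % r ↔ l % r = (s + (r-1)) % r := by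
  constructor
  · intro h
    have h2 : (l + 1 + (r-1)) % r = (s + (r-1)) % r := Nat.ModEq.add_right _ h
    rwa [show l + 1 + (r-1) = l + r by omega, Nat.add_mod_right] at h2
  · intro h
    have h2 : (l + 1) % r = (s + (r-1) + 1) % r := Nat.ModEq.add_right 1 h
    rwa [show s + (r-1) + 1 = s + r by omega, Nat.add_mod_right] at h2

lemma cond_ins [Finite α] {r : ℕ} (hr : 1 ≤ r) (s : ℕ) (x0 : α) (τ : Equiv.Perm α) :
    GCond r s none (ins x0 τ) ↔ GCond r (s + (r-1)) x0 τ := by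
  constructor
  · rintro ⟨h1, h2⟩
    refine ⟨fun x hx => ?_, ?_⟩
    · by_cases hc : τ.SameCycle x0 x
      · exact hc
      · exact (ins_sameCycle x0 τ x).1 (h1 (some x) (by rwa [mp_ins_some x0 τ hc]))
    · rw [mp_ins_none] at h2
      exact (mod_shift hr).1 h2
  · rintro ⟨h1, h2⟩
    constructor
    · intro z hz
      match z with
      | none => exact Equiv.Perm.SameCycle.refl _ _
      | some x =>
        by_cases hc : τ.SameCycle x0 x
        · exact (ins_sameCycle x0 τ x).2 hc
        · rw [mp_ins_some x0 τ hc] at hz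
          exact absurd (h1 x hz) hc
    · rw [mp_ins_none]
      exact (mod_shift hr).2 h2

lemma optionCongr_pow_some (τ : Equiv.Perm α) (n : ℕ) (x : α) :
    ((Equiv.optionCongr τ) ^ n) (some x) = some ((τ ^ n) x) := by
  induction n with
  | zero => simp
  | succ n ih => rw [pow_succ', pow_succ', Equiv.Perm.mul_apply, ih, Equiv.Perm.mul_apply]; simp

lemma mp_optionCongr_some (τ : Equiv.Perm α) (x : α) :
    minimalPeriod ⇑(Equiv.optionCongr τ) (some x) = minimalPeriod ⇑τ x := by
  rw [minimalPeriod_eq_minimalPeriod_iff]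
  intro n
  show (⇑(Equiv.optionCongr τ))^[n] (some x) = some x ↔ (⇑τ)^[n] x = x
  rw [Equiv.Perm.iterate_eq_pow, Equiv.Perm.iterate_eq_pow, optionCongr_pow_some]
  exact ⟨fun h => Option.some_injective _ h, fun h => by rw [h]⟩

lemma mp_optionCongr_none (τ : Equiv.Perm α) :
    minimalPeriod ⇑(Equiv.optionCongr τ) none = 1 :=
  minimalPeriod_eq_one_iff_isFixedPt.2 (by show (Equiv.optionCongr τ) none = none; simp)

lemma cond_optionCongr {r : ℕ} (hr : 2 ≤ r) (s : ℕ) (τ : Equiv.Perm α) :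
    GCond r s none (Equiv.optionCongr τ) ↔
      (1 % r = s % r ∧ ∀ x, ¬ r ∣ minimalPeriod ⇑τ x) := by
  constructor
  · rintro ⟨h1, h2⟩
    rw [mp_optionCongr_none] at h2
    refine ⟨h2, fun x hx => ?_⟩
    have hsc := h1 (some x) (by rwa [mp_optionCongr_some])
    have : (none : Option α) = some x :=
      hsc.eq_of_left (by show (Equiv.optionCongr τ) none = none; simp)
    exact absurd this (Option.some_ne_none x).symm
  · rintro ⟨he, h⟩
    constructor
    · intro z hz
      cases z with
      | none => exact Equiv.Perm.SameCycle.refl _ _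
      | some x =>
        rw [mp_optionCongr_some] at hz
        exact absurd hz (h x)
    · rw [mp_optionCongr_none]
      exact he

lemma card_perm_option (γ : Type*) [Fintype γ] [DecidableEq γ]
    (C : Equiv.Perm (Option γ) → Prop) :
    Nat.card {σ : Equiv.Perm (Option γ) // C σ} =
      Nat.card {τ : Equiv.Perm γ // C (Equiv.optionCongr τ)} +
      ∑ x0 : γ, Nat.card {τ : Equiv.Perm γ // C (ins x0 τ)} := by
  have e1 : {σ : Equiv.Perm (Option γ) // C σ} ≃
      Σ y : Option γ, {τ : Equiv.Perm γ // C (Equiv.Perm.decomposeOption.symm (y, τ))} :=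
    (Equiv.subtypeEquiv Equiv.Perm.decomposeOption
      (fun σ => by rw [Equiv.symm_apply_apply])).trans
      (Equiv.subtypeProdEquivSigmaSubtype fun y τ => C (Equiv.Perm.decomposeOption.symm (y, τ)))
  rw [Nat.card_congr e1, nat_card_sigma, Fintype.sum_option]
  have hnone : ∀ τ : Equiv.Perm γ,
      Equiv.Perm.decomposeOption.symm ((none : Option γ), τ) = Equiv.optionCongr τ := by
    intro τ
    rw [Equiv.Perm.decomposeOption_symm_apply]
    simp [Equiv.swap_self]
    rfl
  have hsome : ∀ (x0 : γ) (τ : Equiv.Perm γ),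
      Equiv.Perm.decomposeOption.symm (some x0, τ) = ins x0 τ := fun x0 τ =>
    Equiv.Perm.decomposeOption_symm_apply _
  simp only [hnone, hsome]

noncomputable def gg (r s n : ℕ) : ℕ := Gcnt r s (Option (Fin n)) none

noncomputable def aa (r n : ℕ) : ℕ := Afree r (Fin n)

lemma gmod (r n : ℕ) {s s' : ℕ} (h : s % r = s' % r) : gg r s n = gg r s' n := by
  unfold gg Gcnt GCond
  rw [h]

lemma g_rec {r : ℕ} (hr : 2 ≤ r) (s n : ℕ) :
    gg r s (n+1) = (if s % r = 1 % r then aa r (n+1) else 0) +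
      (n+1) * gg r (s + (r-1)) n := by
  have h1 := card_perm_option (Fin (n+1)) (GCond r s none)
  have h2 : Nat.card {τ : Equiv.Perm (Fin (n+1)) // GCond r s none (Equiv.optionCongr τ)} =
      if s % r = 1 % r then aa r (n+1) else 0 := by
    by_cases hc : s % r = 1 % r
    · rw [if_pos hc]
      refine Nat.card_congr (Equiv.subtypeEquiv (Equiv.refl _) fun τ => ?_)
      rw [cond_optionCongr hr]
      simp only [Equiv.refl_apply]
      exact ⟨fun h => h.2, fun h => ⟨hc.symm, h⟩⟩
    · rw [if_neg hc]
      have : IsEmpty {τ : Equiv.Perm (Fin (n+1)) // GCond r s none (Equiv.optionCongr τ)} :=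
        ⟨fun ⟨τ, h⟩ => hc (((cond_optionCongr hr s τ).1 h).1).symm⟩
      exact Nat.card_of_isEmpty
  have h3 : ∀ x0 : Fin (n+1),
      Nat.card {τ : Equiv.Perm (Fin (n+1)) // GCond r s none (ins x0 τ)} =
        gg r (s + (r-1)) n := by
    intro x0
    have e : Nat.card {τ : Equiv.Perm (Fin (n+1)) // GCond r s none (ins x0 τ)} =
        Gcnt r (s+(r-1)) (Fin (n+1)) x0 :=
      Nat.card_congr (Equiv.subtypeEquiv (Equiv.refl _) fun τ => by
        simpa using cond_ins (by omega : 1 ≤ r) s x0 τ)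
    rw [e, Gcnt_point r _ x0 0, Gcnt_congr r _ (finSuccEquiv n) 0, finSuccEquiv_zero]
    rfl
  have hgg : gg r s (n+1) = Nat.card {σ : Equiv.Perm (Option (Fin (n+1))) // GCond r s none σ} := rfl
  rw [hgg, h1, h2]
  simp only [h3, Finset.sum_const, Finset.card_univ, Fintype.card_fin, smul_eq_mul]

lemma a_sum {r : ℕ} (hr : 2 ≤ r) (n : ℕ) :
    aa r (n+1) = ∑ s ∈ Finset.Ico 1 r, gg r s n := by
  have hside : ∀ σ : Equiv.Perm (Option (Fin n)),
      (∀ x, ¬ r ∣ minimalPeriod ⇑σ x) → minimalPeriod ⇑σ none % r ∈ Finset.Ico 1 r := by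
    intro σ hσ
    refine Finset.mem_Ico.2 ⟨?_, Nat.mod_lt _ (by omega)⟩
    have h1 := hσ none
    rcases Nat.eq_zero_or_pos (minimalPeriod ⇑σ none % r) with h | h
    · exact absurd (Nat.dvd_of_mod_eq_zero h) h1
    · exact h
  have h0 : aa r (n+1) = Afree r (Option (Fin n)) := Afree_congr r (finSuccEquiv n)
  rw [h0]
  unfold Afree
  rw [card_partition (fun σ : Equiv.Perm (Option (Fin n)) => ∀ x, ¬ r ∣ minimalPeriod ⇑σ x)
    (fun σ => minimalPeriod ⇑σ none % r) (Finset.Ico 1 r) hside]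
  refine Finset.sum_congr rfl fun s hs => ?_
  obtain ⟨hs1, hs2⟩ := Finset.mem_Ico.1 hs
  refine Nat.card_congr (Equiv.subtypeEquiv (Equiv.refl _) fun σ => ?_)
  simp only [Equiv.refl_apply]
  show _ ↔ GCond r s none σ
  constructor
  · rintro ⟨h1, h2⟩
    exact ⟨fun x hx => absurd hx (h1 x), by rw [h2, Nat.mod_eq_of_lt hs2]⟩
  · rintro ⟨h1, h2⟩
    have hmp : minimalPeriod ⇑σ none % r = s := by rw [h2, Nat.mod_eq_of_lt hs2]
    refine ⟨fun x hx => ?_, hmp⟩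
    have hsc := h1 x hx
    rw [← mp_of_sameCycle hsc] at hx
    have h0' : minimalPeriod ⇑σ none % r = 0 :=
      Nat.dvd_iff_mod_eq_zero.1 hx
    omega

lemma g_base {r : ℕ} (hr : 2 ≤ r) (s : ℕ) : gg r s 0 = if s % r = 1 % r then 1 else 0 := by
  have hall : ∀ y : Option (Fin 0), y = none := fun y => by
    cases y with
    | none => rfl
    | some z => exact z.elim0
  have hfix : ∀ σ : Equiv.Perm (Option (Fin 0)), σ none = none := fun σ => hall _
  by_cases hc : s % r = 1 % r
  · rw [if_pos hc]
    have hsub : Subsingleton (Equiv.Perm (Option (Fin 0))) :=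
      ⟨fun a b => Equiv.ext fun x => by rw [hall (a x), hall (b x)]⟩
    have hne : Nonempty {σ : Equiv.Perm (Option (Fin 0)) // GCond r s none σ} := by
      refine ⟨⟨1, ?_, ?_⟩⟩
      · intro x hx
        show Equiv.Perm.SameCycle 1 none x
        rw [hall x]
      · show minimalPeriod ⇑(1 : Equiv.Perm (Option (Fin 0))) none % r = s % r
        have : minimalPeriod ⇑(1 : Equiv.Perm (Option (Fin 0))) none = 1 :=
          minimalPeriod_eq_one_iff_isFixedPt.2 rfl
        rw [this, hc.symm]
    exact Nat.card_unique
  · rw [if_neg hc]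
    have : IsEmpty {σ : Equiv.Perm (Option (Fin 0)) // GCond r s none σ} := by
      refine ⟨fun ⟨σ, h1, h2⟩ => ?_⟩
      have : minimalPeriod ⇑σ none = 1 :=
        minimalPeriod_eq_one_iff_isFixedPt.2 (hfix σ)
      rw [this] at h2
      exact hc h2.symm
    exact Nat.card_of_isEmpty


lemma aa_zero (r : ℕ) : aa r 0 = 1 := Afree_zero r

lemma aa_one {r : ℕ} (hr : 2 ≤ r) : aa r 1 = 1 := by
  rw [a_sum hr 0]
  have hterm : ∀ s ∈ Finset.Ico 1 r, gg r s 0 = if s = 1 then 1 else 0 := by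
    intro s hs
    obtain ⟨h1, h2⟩ := Finset.mem_Ico.1 hs
    rw [g_base hr s, Nat.mod_eq_of_lt h2, Nat.mod_eq_of_lt (by omega : 1 < r)]
  rw [Finset.sum_congr rfl hterm, Finset.sum_ite_eq' (Finset.Ico 1 r) 1 (fun _ => 1),
    if_pos (Finset.mem_Ico.2 ⟨le_refl 1, by omega⟩)]

def Inv (r n : ℕ) : Prop :=
  ∃ H L : ℕ,
    (∀ s, 1 ≤ s → s ≤ r → gg r s n = if s ≤ (n+1) % r then H else L) ∧
    (1 ≤ (n+1) % r → aa r (n+1) + (n+1) * L = (n+1) * H) ∧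
    ((n+1) % r = 0 → H = L)

lemma sum_eval {r : ℕ} (hr : 2 ≤ r) {n H L : ℕ}
    (hg : ∀ s, 1 ≤ s → s ≤ r → gg r s n = if s ≤ (n+1) % r then H else L) :
    aa r (n+1) = (n+1) % r * H + (r - 1 - (n+1) % r) * L := by
  rw [a_sum hr n]
  set s0 := (n+1) % r with hs0def
  have hs0 : s0 < r := Nat.mod_lt _ (by omega)
  rw [← Finset.sum_Ico_consecutive _ (by omega : 1 ≤ s0+1) (by omega : s0+1 ≤ r)]
  have e1 : ∀ s ∈ Finset.Ico 1 (s0+1), gg r s n = H := by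
    intro s hs
    obtain ⟨a, b⟩ := Finset.mem_Ico.1 hs
    rw [hg s a (by omega), if_pos (by omega)]
  have e2 : ∀ s ∈ Finset.Ico (s0+1) r, gg r s n = L := by
    intro s hs
    obtain ⟨a, b⟩ := Finset.mem_Ico.1 hs
    rw [hg s (by omega) (by omega), if_neg (by omega)]
  rw [Finset.sum_congr rfl e1, Finset.sum_congr rfl e2, Finset.sum_const, Finset.sum_const,
    Nat.card_Ico, Nat.card_Ico, smul_eq_mul, smul_eq_mul,
    show s0 + 1 - 1 = s0 by omega, show r - (s0+1) = r - 1 - s0 by omega]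

lemma Inv_zero {r : ℕ} (hr : 2 ≤ r) : Inv r 0 := by
  refine ⟨1, 0, ?_, ?_, ?_⟩
  · intro s h1 h2
    rw [g_base hr s, Nat.mod_eq_of_lt (by omega : 1 < r)]
    by_cases hc : s = 1
    · subst hc
      rw [if_pos (Nat.mod_eq_of_lt (by omega : 1 < r)), if_pos (le_refl 1)]
    · have hs1 : ¬ s % r = 1 := by
        rcases eq_or_lt_of_le h2 with h | h
        · subst h; rw [Nat.mod_self]; omega
        · rw [Nat.mod_eq_of_lt h]; omega
      rw [if_neg hs1, if_neg (by omega)]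
  · intro _
    rw [aa_one hr]
  · intro h
    rw [Nat.mod_eq_of_lt (by omega : 0+1 < r)] at h
    omega

lemma Inv_step {r : ℕ} (hr : 2 ≤ r) (n : ℕ) (h : Inv r n) :
    Inv r (n+1) ∧ aa r (n+2) = (if (n+2) % r = 0 then (n+1) else (n+2)) * aa r (n+1) := by
  obtain ⟨H, L, hg, h2, h3⟩ := h
  set s0 := (n+1) % r with hs0def
  have hs0 : s0 < r := Nat.mod_lt _ (by omega)
  have hA : aa r (n+1) = s0 * H + (r - 1 - s0) * L := sum_eval hr hg
  have hgr : gg r r n = L := by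
    rw [hg r (by omega) (le_refl r), if_neg (by omega)]
  have hg1 : gg r 1 (n+1) = aa r (n+1) + (n+1) * L := by
    rw [g_rec hr 1 n, if_pos rfl, gmod r n
      (show (1 + (r-1)) % r = r % r by rw [show 1 + (r-1) = r by omega]), hgr]
  have hgs : ∀ s, 2 ≤ s → s ≤ r →
      gg r s (n+1) = (n+1) * (if s - 1 ≤ s0 then H else L) := by
    intro s hs2 hsr
    have hif : ¬ s % r = 1 % r := by
      rw [Nat.mod_eq_of_lt (by omega : 1 < r)]
      rcases eq_or_lt_of_le hsr with h | h
      · subst h; rw [Nat.mod_self]; omega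
      · rw [Nat.mod_eq_of_lt h]; omega
    rw [g_rec hr s n, if_neg hif, gmod r n
      (show (s + (r-1)) % r = (s-1) % r by rw [show s + (r-1) = (s-1) + r by omega,
        Nat.add_mod_right]), hg (s-1) (by omega) (by omega), zero_add]
  have hsucc : (n + 2) % r = (s0 + 1) % r := by
    rw [show n + 2 = (n+1) + 1 from rfl, Nat.add_mod (n+1) 1 r,
      Nat.mod_eq_of_lt (by omega : 1 < r), ← hs0def]
  rcases eq_or_lt_of_le (show s0 + 1 ≤ r by omega) with hcase | hcase
  · -- s0 = r - 1, so (n+2) % r = 0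
    have hmod2 : (n+2) % r = 0 := by rw [hsucc, hcase, Nat.mod_self]
    have hs01 : 1 ≤ s0 := by omega
    have hE1 : aa r (n+1) + (n+1) * L = (n+1) * H := h2 hs01
    have hgnew : ∀ s, 1 ≤ s → s ≤ r → gg r s (n+1) =
        if s ≤ (n+2) % r then (n+1) * H else (n+1) * H := by
      intro s hs1 hsr
      rw [hmod2, if_neg (by omega : ¬ s ≤ 0)]
      rcases eq_or_lt_of_le hs1 with h | h
      · rw [← h, hg1, hE1]
      · rw [hgs s (by omega) hsr, if_pos (by omega)]
    refine ⟨⟨(n+1) * H, (n+1) * H, hgnew, ?_, fun _ => rfl⟩, ?_⟩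
    · intro hcon
      rw [hmod2] at hcon
      omega
    · rw [if_pos hmod2]
      have hs2 := sum_eval hr hgnew
      rw [hmod2] at hs2
      rw [hs2, hA, show r - 1 - s0 = 0 by omega, show s0 = r - 1 by omega,
        show r - 1 - 0 = r - 1 by omega]
      ring
  · -- s0 + 1 < r
    have hmod2 : (n+2) % r = s0 + 1 := by rw [hsucc, Nat.mod_eq_of_lt hcase]
    obtain ⟨c, hc⟩ : ∃ c, r - 1 - s0 = c + 1 := ⟨r - 2 - s0, by omega⟩
    have hA' : aa r (n+1) = s0 * H + (c+1) * L := by rw [hA, hc]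
    have hgnew : ∀ s, 1 ≤ s → s ≤ r → gg r s (n+1) =
        if s ≤ (n+2) % r then aa r (n+1) + (n+1) * L else (n+1) * L := by
      intro s hs1 hsr
      rw [hmod2]
      rcases eq_or_lt_of_le hs1 with h | h
      · rw [← h, hg1, if_pos (by omega)]
      · rw [hgs s (by omega) hsr]
        by_cases hcc : s ≤ s0 + 1
        · rw [if_pos (by omega : s - 1 ≤ s0), if_pos hcc]
          have hE1 : aa r (n+1) + (n+1) * L = (n+1) * H := h2 (by omega)
          rw [← hE1]
        · rw [if_neg (by omega : ¬ s - 1 ≤ s0), if_neg hcc]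
    have hAnew : aa r (n+2) = (s0+1) * (aa r (n+1) + (n+1) * L) + c * ((n+1) * L) := by
      have hs2 := sum_eval hr hgnew
      rw [hmod2, show r - 1 - (s0+1) = c by omega] at hs2
      exact hs2
    constructor
    · refine ⟨aa r (n+1) + (n+1) * L, (n+1) * L, hgnew, ?_, ?_⟩
      · intro _
        rw [hAnew]
        rcases Nat.eq_zero_or_pos s0 with hs00 | hs0pos
        · have hHL : H = L := h3 (by omega)
          have hAe : aa r (n+1) = (c+1) * L := by rw [hA', hs00, hHL]; ring
          rw [hs00]
          zify
          zify at hAe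
          linear_combination (-(n : ℤ) - 1) * hAe
        · have hE1 : aa r (n+1) + (n+1) * L = (n+1) * H := h2 hs0pos
          have key : s0 * H + (c+1) * L + (n+1) * L = (n+1) * H := by
            rw [← hA']; exact hE1
          zify
          zify at key hE1
          linear_combination ((s0 : ℤ) - (n : ℤ) - 1) * hE1 + ((n : ℤ) + 1) * key
      · intro hcon
        rw [hmod2] at hcon
        omega
    · rw [if_neg (by rw [hmod2]; omega), hAnew]
      rcases Nat.eq_zero_or_pos s0 with hs00 | hs0pos
      · have hHL : H = L := h3 (by omega)
        have hAe : aa r (n+1) = (c+1) * L := by rw [hA', hs00, hHL]; ring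
        rw [hs00]
        zify
        zify at hAe
        linear_combination (-(n : ℤ) - 1) * hAe
      · have hE1 : aa r (n+1) + (n+1) * L = (n+1) * H := h2 hs0pos
        have key : s0 * H + (c+1) * L + (n+1) * L = (n+1) * H := by
          rw [← hA']; exact hE1
        zify
        zify at key hE1
        linear_combination ((s0 : ℤ) - (n : ℤ) - 1) * hE1 + ((n : ℤ) + 1) * key


lemma Inv_all {r : ℕ} (hr : 2 ≤ r) : ∀ n, Inv r n := by
  intro n
  induction n with
  | zero => exact Inv_zero hr
  | succ n ih => exact (Inv_step hr n ih).1

lemma astep {r : ℕ} (hr : 2 ≤ r) (N : ℕ) :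
    aa r (N+1) = (if (N+1) % r = 0 then N else N+1) * aa r N := by
  cases N with
  | zero =>
    rw [aa_one hr, aa_zero, if_neg (by rw [Nat.mod_eq_of_lt (by omega : 0+1 < r)]; omega)]
  | succ n => exact (Inv_step hr n (Inv_all hr n)).2

lemma chain {r : ℕ} (hr : 2 ≤ r) (n : ℕ) (hn : r ∣ n) (hpos : 0 < n) :
    ∀ j, j ≤ r - 1 → aa r (n-1) = (n-1).descFactorial j * aa r (n-1-j) := by
  have hrn : r ≤ n := Nat.le_of_dvd hpos hn
  intro j
  induction j with
  | zero => intro _; simp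
  | succ j ih =>
    intro hj
    have hj' : j ≤ r - 1 := by omega
    have hN : n - 1 - j = (n - 2 - j) + 1 := by omega
    have hstep := astep hr (n - 2 - j)
    rw [← hN] at hstep
    have hnd : ¬ (n - 2 - j + 1) % r = 0 := by
      intro hcon
      have hdvd : r ∣ (n - 2 - j + 1) := Nat.dvd_of_mod_eq_zero hcon
      have heq : n - 2 - j + 1 = n - (j + 1) := by omega
      rw [heq] at hdvd
      have : r ∣ (j + 1) := by
        have h1 : r ∣ n - (n - (j+1)) := Nat.dvd_sub hn hdvd
        rwa [show n - (n - (j+1)) = j + 1 by omega] at h1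
      have := Nat.le_of_dvd (by omega) this
      omega
    rw [← hN] at hnd
    rw [if_neg hnd] at hstep
    rw [ih hj', hstep, Nat.descFactorial_succ,
      show n - 1 - (j+1) = n - 2 - j by omega]
    ring

end Stmt12

/-- `|Reg_r(rm)| = (rm-1) · (rm-1)_{r-1} · |Reg_r(rm-r)|`. -/
theorem stmt12 (r m : ℕ) (hr : 2 ≤ r) (hm : 1 ≤ m) :
    Nat.card {σ : Equiv.Perm (Fin (r * m)) //
        ∀ x, ¬ r ∣ Function.minimalPeriod ⇑σ x} =
      (r * m - 1) * Nat.descFactorial (r * m - 1) (r - 1) *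
        Nat.card {σ : Equiv.Perm (Fin (r * m - r)) //
          ∀ x, ¬ r ∣ Function.minimalPeriod ⇑σ x} := by
  have hn : 2 ≤ r * m := le_trans hr (Nat.le_mul_of_pos_right r hm)
  have hrn : r ≤ r * m := Nat.le_mul_of_pos_right r hm
  have hdvd : r ∣ r * m := Dvd.intro m rfl
  have hL : Nat.card {σ : Equiv.Perm (Fin (r * m)) //
      ∀ x, ¬ r ∣ Function.minimalPeriod ⇑σ x} = Stmt12.aa r (r*m) := rfl
  have hR : Nat.card {σ : Equiv.Perm (Fin (r * m - r)) //
      ∀ x, ¬ r ∣ Function.minimalPeriod ⇑σ x} = Stmt12.aa r (r*m - r) := rfl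
  rw [hL, hR]
  have h1 := Stmt12.astep hr (r*m - 1)
  rw [show r*m - 1 + 1 = r*m by omega] at h1
  rw [if_pos (by rw [Nat.mul_mod_right])] at h1
  have h2 := Stmt12.chain hr (r*m) hdvd (by omega) (r-1) le_rfl
  rw [show r*m - 1 - (r-1) = r*m - r by omega] at h2
  rw [h1, h2]
  ring
end
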